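/- arXiv:0802.3640 — 6 statements merged into one kernel-verified Lean document; each statement's English description precedes it below -/
import Mathlib

section
/- Let f ∈ F(Z) (i.e., f : Z → ℝ ∪ {+∞} is proper, convex and f ≥ c on Z). If z₁ = (x₁,x₁*), z₂ = (x₂,x₂*) ∈ Z and ε₁, ε₂ ≥ 0 satisfy f(z₁) ≤ c(z₁) + ε₁ and f(z₂) ≤ c(z₂) + ε₂, then ⟨x₁ − x₂, x₁* − x₂*⟩ ≥ −2(ε₁ + ε₂). -/
open NormedSpace

noncomputable section

/-- The coupling `c(x, x*) := ⟨x, x*⟩` on `Z := X × X*`. -/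
def coup (X : Type*) [NormedAddCommGroup X] [NormedSpace ℝ X]
    (z : X × StrongDual ℝ X) : ℝ := z.2 z.1

/-- If `f ∈ F(Z)` (proper, convex, `f ≥ c` on `Z`), `f z₁ ≤ c z₁ + ε₁` and
`f z₂ ≤ c z₂ + ε₂` with `ε₁, ε₂ ≥ 0`, then `⟨x₁ - x₂, x₁* - x₂*⟩ ≥ -2(ε₁ + ε₂)`. -/
theorem stmt0 {X : Type*} [NormedAddCommGroup X] [NormedSpace ℝ X] [CompleteSpace X]
    (f : X × StrongDual ℝ X → EReal)
    (hne_bot : ∀ z, f z ≠ ⊥) (hproper : ∃ z, f z ≠ ⊤)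
    (hconv : Convex ℝ {p : (X × StrongDual ℝ X) × ℝ | f p.1 ≤ (p.2 : EReal)})
    (hge : ∀ z, ((coup X z : ℝ) : EReal) ≤ f z)
    (z₁ z₂ : X × StrongDual ℝ X) (ε₁ ε₂ : ℝ) (hε₁ : 0 ≤ ε₁) (hε₂ : 0 ≤ ε₂)
    (h₁ : f z₁ ≤ ((coup X z₁ + ε₁ : ℝ) : EReal))
    (h₂ : f z₂ ≤ ((coup X z₂ + ε₂ : ℝ) : EReal)) :
    -2 * (ε₁ + ε₂) ≤ (z₁.2 - z₂.2) (z₁.1 - z₂.1) := by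
  have hm₁ : ((z₁, coup X z₁ + ε₁) : (X × StrongDual ℝ X) × ℝ) ∈
      {p : (X × StrongDual ℝ X) × ℝ | f p.1 ≤ (p.2 : EReal)} := h₁
  have hm₂ : ((z₂, coup X z₂ + ε₂) : (X × StrongDual ℝ X) × ℝ) ∈
      {p : (X × StrongDual ℝ X) × ℝ | f p.1 ≤ (p.2 : EReal)} := h₂
  have key := hconv hm₁ hm₂ (by norm_num : (0:ℝ) ≤ 2⁻¹) (by norm_num : (0:ℝ) ≤ 2⁻¹)
    (by norm_num : (2⁻¹:ℝ) + 2⁻¹ = 1)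
  set m : X × StrongDual ℝ X := (2⁻¹:ℝ) • z₁ + (2⁻¹:ℝ) • z₂ with hm
  have key' : f m ≤ (((2⁻¹:ℝ) * (coup X z₁ + ε₁) + (2⁻¹:ℝ) * (coup X z₂ + ε₂) : ℝ) : EReal) := by
    simpa using key
  have hcm : ((coup X m : ℝ) : EReal) ≤
      (((2⁻¹:ℝ) * (coup X z₁ + ε₁) + (2⁻¹:ℝ) * (coup X z₂ + ε₂) : ℝ) : EReal) :=
    le_trans (hge m) key'
  have hreal : coup X m ≤ (2⁻¹:ℝ) * (coup X z₁ + ε₁) + (2⁻¹:ℝ) * (coup X z₂ + ε₂) := by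
    exact_mod_cast hcm
  have hmval : coup X m =
      (4⁻¹:ℝ) * (z₁.2 z₁.1 + z₁.2 z₂.1 + z₂.2 z₁.1 + z₂.2 z₂.1) := by
    simp only [hm, coup, Prod.smul_fst, Prod.smul_snd, Prod.fst_add, Prod.snd_add,
      ContinuousLinearMap.add_apply, ContinuousLinearMap.coe_smul', Pi.smul_apply, map_add,
      map_smul]
    ring_nf
  have happ : (z₁.2 - z₂.2) (z₁.1 - z₂.1) =
      z₁.2 z₁.1 - z₁.2 z₂.1 - z₂.2 z₁.1 + z₂.2 z₂.1 := by
    simp [ContinuousLinearMap.sub_apply, map_sub]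
    ring
  have hc₁ : coup X z₁ = z₁.2 z₁.1 := rfl
  have hc₂ : coup X z₂ = z₂.2 z₂.1 := rfl
  rw [hmval, hc₁, hc₂] at hreal
  rw [happ]
  linarith
end
end

section
/- Let f ∈ G(Z). Then for every z ∈ Z one has inf_{w ∈ Z} ( f_z(w) + h(w) ) = 0; moreover the dual problem has value 0 and is attained: there exists w* ∈ X* × X** such that ( f*(ẑ + w*) − c(ẑ + w*) ) + ( h*(w*) + c(w*) ) = 0, where h*(u*,u**) = ½‖u*‖² + ½‖u**‖², and every w* ∈ X* × X** satisfies ( f*(ẑ + w*) − c(ẑ + w*) ) + ( h*(w*) + c(w*) ) ≥ 0. -/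
open NormedSpace

noncomputable section

/-- The coupling `c(u*, u**) := ⟨u*, u**⟩` on `Z* := X* × X**`. -/
def coupS (X : Type*) [NormedAddCommGroup X] [NormedSpace ℝ X]
    (p : StrongDual ℝ X × StrongDual ℝ (StrongDual ℝ X)) : ℝ := p.2 p.1

/-- The Fenchel conjugate `f* : X* × X** → ℝ ∪ {±∞}` of `f : Z → ℝ ∪ {+∞}`. -/
def conjF (X : Type*) [NormedAddCommGroup X] [NormedSpace ℝ X]
    (f : X × StrongDual ℝ X → EReal) (p : StrongDual ℝ X × StrongDual ℝ (StrongDual ℝ X)) : EReal :=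
  ⨆ z : X × StrongDual ℝ X, (((p.1 z.1 + p.2 z.2 : ℝ) : EReal) - f z)

/-- `ẑ := (x*, ĵ x)` for `z = (x, x*)`, where `ĵ` is the canonical embedding `X → X**`. -/
def hatz (X : Type*) [NormedAddCommGroup X] [NormedSpace ℝ X]
    (z : X × StrongDual ℝ X) : StrongDual ℝ X × StrongDual ℝ (StrongDual ℝ X) :=
  (z.2, inclusionInDoubleDual ℝ X z.1)

/-- `h(x, x*) := ‖x‖²/2 + ‖x*‖²/2`. -/
def hfun (X : Type*) [NormedAddCommGroup X] [NormedSpace ℝ X]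
    (z : X × StrongDual ℝ X) : ℝ := ‖z.1‖ ^ 2 / 2 + ‖z.2‖ ^ 2 / 2

/-- `h*(u*, u**) = ‖u*‖²/2 + ‖u**‖²/2`. -/
def hstar (X : Type*) [NormedAddCommGroup X] [NormedSpace ℝ X]
    (p : StrongDual ℝ X × StrongDual ℝ (StrongDual ℝ X)) : ℝ := ‖p.1‖ ^ 2 / 2 + ‖p.2‖ ^ 2 / 2

-- auxiliary lemmas


lemma norm_sq_combo {E : Type*} [SeminormedAddCommGroup E] [NormedSpace ℝ E]
    (x y : E) {a b : ℝ} (ha : 0 ≤ a) (hb : 0 ≤ b) (hab : a + b = 1) :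
    ‖a • x + b • y‖ ^ 2 ≤ a * ‖x‖ ^ 2 + b * ‖y‖ ^ 2 := by
  have h1 : ‖a • x + b • y‖ ≤ a * ‖x‖ + b * ‖y‖ := by
    refine (norm_add_le _ _).trans ?_
    rw [norm_smul, norm_smul, Real.norm_eq_abs, Real.norm_eq_abs,
      abs_of_nonneg ha, abs_of_nonneg hb]
  nlinarith [norm_nonneg x, norm_nonneg y, norm_nonneg (a • x + b • y),
    sq_nonneg (‖x‖ - ‖y‖), mul_nonneg ha hb]

lemma exists_dual_approx {E : Type*} [NormedAddCommGroup E] [NormedSpace ℝ E]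
    (φ : E →L[ℝ] ℝ) {ε : ℝ} (hε : 0 < ε) :
    ∃ y : E, ‖y‖ ^ 2 / 2 - φ y ≤ -(‖φ‖ ^ 2 / 2) + ε := by
  rcases eq_or_lt_of_le (norm_nonneg φ) with h0 | h0
  · exact ⟨0, by simp [← h0]; linarith⟩
  · have hr : max 0 (‖φ‖ - ε / ‖φ‖) < ‖φ‖ := by
      apply max_lt h0
      have : 0 < ε / ‖φ‖ := div_pos hε h0
      linarith
    obtain ⟨x, hx1, hx2⟩ := φ.exists_lt_apply_of_lt_opNorm hr
    have hx2' : ‖φ‖ - ε / ‖φ‖ < ‖φ x‖ := lt_of_le_of_lt (le_max_right _ _) hx2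
    obtain ⟨x', hx'1, hx'2⟩ : ∃ x' : E, ‖x'‖ < 1 ∧ ‖φ‖ - ε / ‖φ‖ < φ x' := by
      rcases le_or_gt 0 (φ x) with h | h
      · exact ⟨x, hx1, by rwa [Real.norm_eq_abs, abs_of_nonneg h] at hx2'⟩
      · refine ⟨-x, by simpa using hx1, ?_⟩
        rw [map_neg]
        rwa [Real.norm_eq_abs, abs_of_neg h] at hx2'
    refine ⟨‖φ‖ • x', ?_⟩
    have h1 : φ (‖φ‖ • x') = ‖φ‖ * φ x' := by simp
    have h2 : ‖(‖φ‖ • x')‖ ^ 2 ≤ ‖φ‖ ^ 2 := by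
      rw [norm_smul, Real.norm_eq_abs, abs_of_nonneg (norm_nonneg φ)]
      have hx2 : ‖x'‖ ^ 2 ≤ 1 := by nlinarith [norm_nonneg x']
      nlinarith [sq_nonneg ‖φ‖]
    have h3 : ‖φ‖ * φ x' ≥ ‖φ‖ * (‖φ‖ - ε / ‖φ‖) := by nlinarith
    have h4 : ‖φ‖ * (‖φ‖ - ε / ‖φ‖) = ‖φ‖ ^ 2 - ε := by
      field_simp
    rw [h1]; nlinarith



lemma hfun_combo {X : Type*} [NormedAddCommGroup X] [NormedSpace ℝ X]
    (v v' : X × StrongDual ℝ X) {a b : ℝ} (ha : 0 ≤ a) (hb : 0 ≤ b) (hab : a + b = 1) :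
    hfun X (a • v + b • v') ≤ a * hfun X v + b * hfun X v' := by
  have h1 := norm_sq_combo v.1 v'.1 ha hb hab
  have h2 := norm_sq_combo v.2 v'.2 ha hb hab
  simp only [hfun, Prod.fst_add, Prod.snd_add, Prod.smul_fst, Prod.smul_snd]
  linarith

lemma coup_hfun_nonneg {X : Type*} [NormedAddCommGroup X] [NormedSpace ℝ X]
    (w : X × StrongDual ℝ X) : 0 ≤ coup X w + hfun X w := by
  have h := w.2.le_opNorm w.1
  rw [Real.norm_eq_abs] at h
  have h2 := neg_abs_le (w.2 w.1)
  simp only [coup, hfun]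
  nlinarith [sq_nonneg (‖w.1‖ - ‖w.2‖), norm_nonneg w.1, norm_nonneg w.2]

lemma coupS_hstar_nonneg {X : Type*} [NormedAddCommGroup X] [NormedSpace ℝ X]
    (w : StrongDual ℝ X × StrongDual ℝ (StrongDual ℝ X)) : 0 ≤ hstar X w + coupS X w := by
  have h := w.2.le_opNorm w.1
  rw [Real.norm_eq_abs] at h
  have h2 := neg_abs_le (w.2 w.1)
  simp only [coupS, hstar]
  nlinarith [sq_nonneg (‖w.1‖ - ‖w.2‖), norm_nonneg w.1, norm_nonneg w.2]

set_option maxHeartbeats 1000000 in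
set_option maxHeartbeats 1000000 in
/-- For `f ∈ G(Z)` and every `z ∈ Z`, `inf_w (f_z(w) + h(w)) = 0`; moreover the
dual problem has value `0` and is attained, and every `w* ∈ X* × X**` gives a nonnegative
dual objective value. -/
theorem stmt1 {X : Type*} [NormedAddCommGroup X] [NormedSpace ℝ X] [CompleteSpace X]
    (f : X × StrongDual ℝ X → EReal)
    (hne_bot : ∀ z, f z ≠ ⊥) (hproper : ∃ z, f z ≠ ⊤)
    (hconv : Convex ℝ {p : (X × StrongDual ℝ X) × ℝ | f p.1 ≤ (p.2 : EReal)})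
    (hge : ∀ z, ((coup X z : ℝ) : EReal) ≤ f z)
    (hgeS : ∀ p, ((coupS X p : ℝ) : EReal) ≤ conjF X f p)
    (z : X × StrongDual ℝ X) :
    (⨅ w : X × StrongDual ℝ X,
        (f (z + w) - ((coup X (z + w) : ℝ) : EReal) + ((coup X w : ℝ) : EReal)
          + ((hfun X w : ℝ) : EReal)) = 0) ∧
    (∃ w : StrongDual ℝ X × StrongDual ℝ (StrongDual ℝ X),
        (conjF X f (hatz X z + w) - ((coupS X (hatz X z + w) : ℝ) : EReal))
          + ((hstar X w + coupS X w : ℝ) : EReal) = 0) ∧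
    (∀ w : StrongDual ℝ X × StrongDual ℝ (StrongDual ℝ X),
        0 ≤ (conjF X f (hatz X z + w) - ((coupS X (hatz X z + w) : ℝ) : EReal))
          + ((hstar X w + coupS X w : ℝ) : EReal)) := by
  classical
  obtain ⟨z₀, hz₀⟩ := hproper
  -- Part 3 : weak duality (every dual point has nonnegative value)
  have Dnonneg : ∀ w : StrongDual ℝ X × StrongDual ℝ (StrongDual ℝ X),
      0 ≤ (conjF X f (hatz X z + w) - ((coupS X (hatz X z + w) : ℝ) : EReal))
        + ((hstar X w + coupS X w : ℝ) : EReal) := by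
    intro w
    have h1 : (0 : EReal) ≤ conjF X f (hatz X z + w) - ((coupS X (hatz X z + w) : ℝ) : EReal) := by
      have := EReal.sub_le_sub (hgeS (hatz X z + w)) (le_refl ((coupS X (hatz X z + w) : ℝ) : EReal))
      calc (0 : EReal) = ((coupS X (hatz X z + w) : ℝ) : EReal)
            - ((coupS X (hatz X z + w) : ℝ) : EReal) := by
            rw [← EReal.coe_sub, sub_self, EReal.coe_zero]
        _ ≤ _ := this
    have h2 : (0 : EReal) ≤ ((hstar X w + coupS X w : ℝ) : EReal) :=
      EReal.coe_nonneg.2 (coupS_hstar_nonneg w)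
    calc (0 : EReal) = 0 + 0 := by simp
      _ ≤ _ := add_le_add h1 h2
  -- the affine shift
  set A : X × StrongDual ℝ X → ℝ := fun w => coup X z + z.2 w.1 + w.2 z.1 with hAdef
  have hA_add : ∀ w : X × StrongDual ℝ X, coup X (z + w) = A w + coup X w := by
    intro w
    simp only [coup, hAdef, Prod.fst_add, Prod.snd_add, ContinuousLinearMap.add_apply, map_add]
    ring
  set P : (X × StrongDual ℝ X) → EReal := fun w =>
    f (z + w) - ((coup X (z + w) : ℝ) : EReal) + ((coup X w : ℝ) : EReal)
      + ((hfun X w : ℝ) : EReal) with hPdef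
  have hreal : ∀ (w : X × StrongDual ℝ X) (r : ℝ), f (z + w) = (r : EReal) →
      P w = ((r - A w + hfun X w : ℝ) : EReal) := by
    intro w r h
    rw [hPdef]
    simp only
    rw [h, hA_add w, ← EReal.coe_sub, ← EReal.coe_add, ← EReal.coe_add, EReal.coe_eq_coe_iff]
    ring
  have hP0 : ∀ w, (0 : EReal) ≤ P w := by
    intro w
    by_cases ht : f (z + w) = ⊤
    · rw [hPdef]; simp only
      rw [ht, EReal.top_sub_coe, EReal.top_add_coe, EReal.top_add_coe]
      exact le_top
    · have hc : f (z + w) = (((f (z + w)).toReal : ℝ) : EReal) :=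
        (EReal.coe_toReal ht (hne_bot _)).symm
      rw [hreal w _ hc]
      apply EReal.coe_nonneg.2
      have hge' : coup X (z + w) ≤ (f (z + w)).toReal := by
        have := hge (z + w); rw [hc] at this; exact_mod_cast this
      have := coup_hfun_nonneg w
      rw [hA_add w] at hge'
      linarith
  set w₀ : X × StrongDual ℝ X := z₀ - z with hw₀def
  have hzw₀ : z + w₀ = z₀ := by rw [hw₀def]; abel
  set ρ : ℝ := (f z₀).toReal with hρdef
  have hρ : f (z + w₀) = (ρ : EReal) := by
    rw [hzw₀]; exact (EReal.coe_toReal hz₀ (hne_bot _)).symm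
  have hinf_nonneg : (0 : EReal) ≤ ⨅ w, P w := le_iInf hP0
  have hinf_le : (⨅ w, P w) ≤ ((ρ - A w₀ + hfun X w₀ : ℝ) : EReal) := by
    rw [← hreal w₀ ρ hρ]; exact iInf_le _ w₀
  set μ : ℝ := (⨅ w, P w).toReal with hμdef
  have hμco : (⨅ w, P w) = (μ : EReal) := by
    rw [hμdef]
    exact (EReal.coe_toReal (ne_top_of_le_ne_top (EReal.coe_ne_top _) hinf_le)
      (ne_of_gt (lt_of_lt_of_le EReal.bot_lt_zero hinf_nonneg))).symm
  have hμ0 : 0 ≤ μ := by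
    rw [hμco] at hinf_nonneg; exact_mod_cast hinf_nonneg
  -- the convex set C
  set C : Set ((X × StrongDual ℝ X) × ℝ) :=
    {ur | ∃ w, f (z + w) ≤ ((ur.2 - hfun X (w + ur.1) + A w : ℝ) : EReal)} with hCdef
  have hCconv : Convex ℝ C := by
    rintro ⟨u, r⟩ hur ⟨u', r'⟩ hur' a b ha hb hab
    obtain ⟨w, hw⟩ := hur
    obtain ⟨w', hw'⟩ := hur'
    refine ⟨a • w + b • w', ?_⟩
    have hz1 : a • (z + w) + b • (z + w') = z + (a • w + b • w') := by
      have hzz : a • z + b • z = z := by rw [← add_smul, hab, one_smul]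
      rw [smul_add, smul_add, add_add_add_comm, hzz]
    have hS := hconv (x := ((z + w, r - hfun X (w + u) + A w)))
      (y := ((z + w', r' - hfun X (w' + u') + A w'))) hw hw' ha hb hab
    simp only [Set.mem_setOf_eq, Prod.fst_add, Prod.snd_add, Prod.smul_fst, Prod.smul_snd,
      smul_eq_mul] at hS
    rw [hz1] at hS
    refine hS.trans ?_
    apply EReal.coe_le_coe_iff.2
    have hAaff : A (a • w + b • w') = a * A w + b * A w' := by
      simp only [hAdef, Prod.fst_add, Prod.snd_add, Prod.smul_fst, Prod.smul_snd, map_add,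
        map_smul, ContinuousLinearMap.add_apply, ContinuousLinearMap.coe_smul', Pi.smul_apply,
        smul_eq_mul]
      linear_combination (coup X z) * hab.symm
    have hcombo : a • (w + u) + b • (w' + u') = (a • w + b • w') + (a • u + b • u') := by
      rw [smul_add, smul_add]; abel
    have hh := hfun_combo (w + u) (w' + u') ha hb hab
    rw [hcombo] at hh
    simp only [Prod.fst_add, Prod.snd_add, Prod.smul_fst, Prod.smul_snd, smul_eq_mul]
    linarith
  -- open subset of C
  set O : Set ((X × StrongDual ℝ X) × ℝ) :=
    {ur | ρ - A w₀ + hfun X (w₀ + ur.1) < ur.2} with hOdef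
  have hOopen : IsOpen O := by
    have hc : Continuous (fun ur : (X × StrongDual ℝ X) × ℝ => ρ - A w₀ + hfun X (w₀ + ur.1)) := by
      simp only [hfun]
      fun_prop
    exact isOpen_lt hc continuous_snd
  have hOsub : O ⊆ C := by
    rintro ⟨u, r⟩ h
    refine ⟨w₀, ?_⟩
    rw [hρ]
    apply EReal.coe_le_coe_iff.2
    simp only [hOdef, Set.mem_setOf_eq] at h
    linarith
  have hOint : O ⊆ interior C := interior_maximal hOsub hOopen
  have hnotin : (((0 : X × StrongDual ℝ X), μ)) ∉ interior C := by
    intro hmem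
    obtain ⟨ε, hε, hball⟩ := Metric.isOpen_iff.1 isOpen_interior _ hmem
    have hbm : (((0 : X × StrongDual ℝ X), μ - ε / 2)) ∈ C := by
      apply interior_subset
      apply hball
      rw [Metric.mem_ball]
      rw [Prod.dist_eq]
      simp only [dist_self, Real.dist_eq]
      rw [max_eq_right (by positivity)]
      rw [abs_of_nonpos (by linarith)]
      linarith
    obtain ⟨w, hw⟩ := hbm
    have hfr : f (z + w) ≠ ⊤ := by
      intro h; rw [h, top_le_iff] at hw; exact EReal.coe_ne_top _ hw
    have hc : f (z + w) = (((f (z + w)).toReal : ℝ) : EReal) :=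
      (EReal.coe_toReal hfr (hne_bot _)).symm
    have hw' : (f (z + w)).toReal ≤ (μ - ε / 2) - hfun X (w + 0) + A w := by
      rw [hc] at hw; exact_mod_cast hw
    rw [add_zero] at hw'
    have hPw : P w ≤ ((μ - ε / 2 : ℝ) : EReal) := by
      rw [hreal w _ hc]
      apply EReal.coe_le_coe_iff.2
      linarith
    have hle : (⨅ w, P w) ≤ ((μ - ε / 2 : ℝ) : EReal) := (iInf_le _ w).trans hPw
    rw [hμco] at hle
    have := EReal.coe_le_coe_iff.1 hle
    linarith
  -- separation
  obtain ⟨F, hF⟩ := geometric_hahn_banach_open_point (hCconv.interior) isOpen_interior hnotin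
  set β : ℝ := F ((0 : X × StrongDual ℝ X), (1 : ℝ)) with hβdef
  have hFdec : ∀ (u : X × StrongDual ℝ X) (r : ℝ), F (u, r) = F (u, 0) + r * β := by
    intro u r
    have h : ((u, r) : (X × StrongDual ℝ X) × ℝ) = (u, 0) + r • ((0 : X × StrongDual ℝ X), (1 : ℝ)) := by
      simp [Prod.ext_iff]
    rw [h, map_add, map_smul, smul_eq_mul]
  have hF00 : F ((0 : X × StrongDual ℝ X), (0 : ℝ)) = 0 := by
    rw [show (((0 : X × StrongDual ℝ X), (0 : ℝ))) = (0 : (X × StrongDual ℝ X) × ℝ) from rfl, map_zero]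
  have hF0 : F ((0 : X × StrongDual ℝ X), μ) = μ * β := by
    rw [hFdec 0 μ, hF00, zero_add]
  set R : ℝ := max (ρ - A w₀ + hfun X w₀ + 1) (μ + 1) with hRdef
  have hRmem : (((0 : X × StrongDual ℝ X), R)) ∈ interior C := by
    apply hOint
    show ρ - A w₀ + hfun X (w₀ + 0) < R
    rw [add_zero]
    calc ρ - A w₀ + hfun X w₀ < ρ - A w₀ + hfun X w₀ + 1 := by linarith
      _ ≤ R := le_max_left _ _
  have hβneg : β < 0 := by
    have h2 := hF _ hRmem
    rw [hF0, hFdec 0 R, hF00, zero_add] at h2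
    have hRμ : μ + 1 ≤ R := le_max_right _ _
    nlinarith
  have hkeyInt : ∀ ur ∈ interior C, F (ur.1, 0) + ur.2 * β < μ * β := by
    intro ur h
    have h2 := hF ur h
    rw [hF0] at h2
    calc F (ur.1, 0) + ur.2 * β = F (ur.1, ur.2) := (hFdec _ _).symm
      _ = F ur := by rw [Prod.mk.eta]
      _ < μ * β := h2
  have hkeyC : ∀ (u : X × StrongDual ℝ X) (r : ℝ), ((u, r)) ∈ C → F (u, 0) + r * β ≤ μ * β := by
    intro u r hur
    by_contra hlt
    push_neg at hlt
    set K : ℝ := F (u, 0) with hK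
    set δ : ℝ := K + r * β - μ * β with hδ
    have hδ0 : 0 < δ := by rw [hδ]; linarith
    set M : ℝ := K + r * β - R * β with hM
    have hstep : ∀ t : ℝ, 0 < t → t ≤ 1 → δ < t * M := by
      intro t ht0 ht1
      have hmem : t • (((0 : X × StrongDual ℝ X), R)) + (1 - t) • ((u, r)) ∈ interior C :=
        hCconv.combo_interior_self_mem_interior hRmem hur ht0 (by linarith) (by ring)
      have h3 := hkeyInt _ hmem
      simp only [Prod.smul_fst, Prod.smul_snd, Prod.fst_add, Prod.snd_add, smul_eq_mul,
        smul_zero, zero_add] at h3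
      have h4 : F ((1 - t) • u, 0) = (1 - t) * K := by
        rw [show (((1 - t) • u, (0 : ℝ))) = (1 - t) • ((u, (0 : ℝ))) from
          by simp [Prod.ext_iff], map_smul, smul_eq_mul, hK]
      rw [h4] at h3
      rw [hδ, hM]
      ring_nf at h3 ⊢
      linarith
    set Mx : ℝ := max M 1 with hMx
    have hMx1 : (1 : ℝ) ≤ Mx := le_max_right _ _
    have hMx0 : 0 < Mx := by linarith
    set t : ℝ := min 1 (δ / (2 * Mx)) with htdef
    have ht0 : 0 < t := lt_min one_pos (div_pos hδ0 (by linarith))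
    have ht1 : t ≤ 1 := min_le_left _ _
    have h1 := hstep t ht0 ht1
    have h2 : t * M ≤ t * Mx := mul_le_mul_of_nonneg_left (le_max_left _ _) ht0.le
    have h3 : t ≤ δ / (2 * Mx) := min_le_right _ _
    have h4 : t * Mx ≤ δ / 2 := by
      calc t * Mx ≤ (δ / (2 * Mx)) * Mx := mul_le_mul_of_nonneg_right h3 hMx0.le
        _ = δ / 2 := by field_simp
    linarith
  -- the dual element
  set p : (X × StrongDual ℝ X) →L[ℝ] ℝ :=
    (-β)⁻¹ • (F.comp (ContinuousLinearMap.inl ℝ (X × StrongDual ℝ X) ℝ)) with hpdef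
  have hp_apply : ∀ u : X × StrongDual ℝ X, p u = (-β)⁻¹ * F (u, 0) := by
    intro u
    simp [hpdef]
  have hbpos : (0 : ℝ) < -β := neg_pos.2 hβneg
  have hkey : ∀ (u : X × StrongDual ℝ X) (r : ℝ), ((u, r)) ∈ C → μ + p u ≤ r := by
    intro u r h
    have h1 := hkeyC u r h
    rw [hp_apply]
    have hβn : β ≠ 0 := ne_of_lt hβneg
    have h3 : (-β)⁻¹ * (F (u, 0) + r * β) ≤ (-β)⁻¹ * (μ * β) :=
      mul_le_mul_of_nonneg_left h1 (inv_pos.2 hbpos).le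
    have h4 : (-β)⁻¹ * (F (u, 0) + r * β) = (-β)⁻¹ * F (u, 0) - r := by
      rw [inv_neg]; field_simp; ring
    have h5 : (-β)⁻¹ * (μ * β) = -μ := by
      rw [inv_neg]; field_simp
    linarith
  set p₁ : StrongDual ℝ X := p.comp (ContinuousLinearMap.inl ℝ X (StrongDual ℝ X)) with hp₁def
  set p₂ : StrongDual ℝ (StrongDual ℝ X) := p.comp (ContinuousLinearMap.inr ℝ X (StrongDual ℝ X)) with hp₂def
  have hpdec : ∀ u : X × StrongDual ℝ X, p u = p₁ u.1 + p₂ u.2 := by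
    intro u
    have h : u = (u.1, 0) + (0, u.2) := by simp
    conv_lhs => rw [h]
    rw [map_add]
    simp [hp₁def, hp₂def]
  have hstar_ineq : ∀ (w t : X × StrongDual ℝ X) (r : ℝ), f (z + w) = (r : EReal) →
      μ + p (t - w) ≤ r - A w + hfun X t := by
    intro w t r hr
    apply hkey (t - w) (r - A w + hfun X t)
    refine ⟨w, ?_⟩
    rw [hr]
    apply EReal.coe_le_coe_iff.2
    show r ≤ (r - A w + hfun X t) - hfun X (w + (t - w)) + A w
    have hw : w + (t - w) = t := by abel
    rw [hw]
    linarith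
  set q : StrongDual ℝ X × StrongDual ℝ (StrongDual ℝ X) := (-p₁, -p₂) with hqdef
  have hstarq : hstar X q = ‖p₁‖ ^ 2 / 2 + ‖p₂‖ ^ 2 / 2 := by
    simp [hstar, hqdef, norm_neg]
    exact congrArg (fun t => t ^ 2) (norm_neg p₂)
  have happrox : ∀ ε : ℝ, 0 < ε → ∃ t : X × StrongDual ℝ X,
      hfun X t - p t ≤ -(hstar X q) + ε := by
    intro ε hε
    obtain ⟨y₁, hy₁⟩ := exists_dual_approx p₁ (half_pos hε)
    obtain ⟨y₂, hy₂⟩ := exists_dual_approx p₂ (half_pos hε)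
    refine ⟨(y₁, y₂), ?_⟩
    rw [hstarq, hpdec]
    simp only [hfun]
    linarith
  -- key inequality for the conjugate
  have hcoups : coupS X (hatz X z + q) - coupS X q = coup X z - p₁ z.1 - p₂ z.2 := by
    simp only [coupS, coup, hatz, hqdef, Prod.fst_add, Prod.snd_add,
      ContinuousLinearMap.add_apply, ContinuousLinearMap.neg_apply, map_add, map_neg, dual_def]
    ring
  have key2 : conjF X f (hatz X z + q) ≤
      ((coupS X (hatz X z + q) - coupS X q - μ - hstar X q : ℝ) : EReal) := by
    apply iSup_le
    intro v
    by_cases hv : f v = ⊤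
    · rw [hv, EReal.sub_top]; exact bot_le
    · have hfv : f v = (((f v).toReal : ℝ) : EReal) := (EReal.coe_toReal hv (hne_bot v)).symm
      set rv : ℝ := (f v).toReal with hrv
      rw [hfv, ← EReal.coe_sub]
      apply EReal.coe_le_coe_iff.2
      have hεform : ∀ ε : ℝ, 0 < ε →
          ((hatz X z + q).1 v.1 + (hatz X z + q).2 v.2) - rv ≤
            (coupS X (hatz X z + q) - coupS X q - μ - hstar X q) + ε := by
        intro ε hε
        obtain ⟨t, ht⟩ := happrox ε hε
        have hst := hstar_ineq (v - z) t rv (by rw [show z + (v - z) = v from by abel]; exact hfv)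
        have hp_t : p (t - (v - z)) = p t - (p₁ v.1 + p₂ v.2) + (p₁ z.1 + p₂ z.2) := by
          rw [map_sub, map_sub, hpdec v, hpdec z]
          ring
        have hA' : A (v - z) = z.2 v.1 + v.2 z.1 - coup X z := by
          simp only [hAdef, coup, Prod.fst_sub, Prod.snd_sub, map_sub,
            ContinuousLinearMap.sub_apply]
          ring
        rw [hp_t, hA'] at hst
        have hLHS : ((hatz X z + q).1 v.1 + (hatz X z + q).2 v.2)
            = z.2 v.1 - p₁ v.1 + (v.2 z.1 - p₂ v.2) := by
          simp only [hatz, hqdef, Prod.fst_add, Prod.snd_add, ContinuousLinearMap.add_apply,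
            ContinuousLinearMap.neg_apply, dual_def]
          ring
        rw [hLHS]
        linarith
      by_contra hcon
      push_neg at hcon
      have := hεform ((((hatz X z + q).1 v.1 + (hatz X z + q).2 v.2) - rv
        - (coupS X (hatz X z + q) - coupS X q - μ - hstar X q)) / 2) (by linarith)
      linarith
  -- conclude
  have hconj_ne_bot : conjF X f (hatz X z + q) ≠ ⊥ := by
    intro h
    have := hgeS (hatz X z + q)
    rw [h, le_bot_iff] at this
    exact EReal.coe_ne_bot _ this
  have hconj_ne_top : conjF X f (hatz X z + q) ≠ ⊤ :=
    ne_top_of_le_ne_top (EReal.coe_ne_top _) key2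
  have hγco : conjF X f (hatz X z + q)
      = (((conjF X f (hatz X z + q)).toReal : ℝ) : EReal) :=
    (EReal.coe_toReal hconj_ne_top hconj_ne_bot).symm
  set γ : ℝ := (conjF X f (hatz X z + q)).toReal with hγdef
  have hγle : γ ≤ coupS X (hatz X z + q) - coupS X q - μ - hstar X q := by
    rw [hγco] at key2; exact_mod_cast key2
  have hDq : (conjF X f (hatz X z + q) - ((coupS X (hatz X z + q) : ℝ) : EReal))
      + ((hstar X q + coupS X q : ℝ) : EReal)
      = ((γ - coupS X (hatz X z + q) + (hstar X q + coupS X q) : ℝ) : EReal) := by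
    rw [hγco, ← EReal.coe_sub, ← EReal.coe_add]
  have hDle : (conjF X f (hatz X z + q) - ((coupS X (hatz X z + q) : ℝ) : EReal))
      + ((hstar X q + coupS X q : ℝ) : EReal) ≤ ((-μ : ℝ) : EReal) := by
    rw [hDq]
    apply EReal.coe_le_coe_iff.2
    linarith
  have hμle : μ ≤ 0 := by
    have h0 : (0 : EReal) ≤ ((-μ : ℝ) : EReal) := le_trans (Dnonneg q) hDle
    have := EReal.coe_nonneg.1 h0
    linarith
  have hμeq : μ = 0 := le_antisymm hμle hμ0
  refine ⟨?_, ⟨q, ?_⟩, Dnonneg⟩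
  · rw [show (⨅ w : X × StrongDual ℝ X,
        (f (z + w) - ((coup X (z + w) : ℝ) : EReal) + ((coup X w : ℝ) : EReal)
          + ((hfun X w : ℝ) : EReal))) = ⨅ w, P w from rfl, hμco, hμeq, EReal.coe_zero]
  · refine le_antisymm (hDle.trans ?_) (Dnonneg q)
    rw [hμeq]
    simp
end
end

section
/- Let f ∈ G(Z). For every z = (x,x*) ∈ Z there exists z* ∈ X* × X** with f*(z*) = c(z*) (i.e., z* ∈ M_{f*}) such that ẑ − z* belongs to the graph of −F_{X*} (i.e., writing ẑ − z* = (v*,v**), one has ‖v*‖² = ‖v**‖² = −⟨v*,v**⟩) and ‖ẑ − z*‖² ≤ 2( f*(ẑ) − c(ẑ) ). Moreover (√2 − 1)‖ẑ − z*‖ ≤ d(ẑ, M_{f*}) ≤ √( 2( f*(ẑ) − c(ẑ) ) ), where d is the distance in X* × X** for the norm ‖(u*,u**)‖ := (‖u*‖² + ‖u**‖²)^{1/2}. -/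
open NormedSpace

noncomputable section

/-- The `ℓ²`-norm `‖(a, b)‖ := (‖a‖² + ‖b‖²)^{1/2}` on a product. -/
def nrm2 {A B : Type*} [NormedAddCommGroup A] [NormedAddCommGroup B] (p : A × B) : ℝ :=
  Real.sqrt (‖p.1‖ ^ 2 + ‖p.2‖ ^ 2)


section MSAux

variable {X : Type*} [NormedAddCommGroup X] [NormedSpace ℝ X]

variable {X : Type*} [NormedAddCommGroup X] [NormedSpace ℝ X]

lemma ms_exists_near {W : Type*} [NormedAddCommGroup W] [NormedSpace ℝ W]
    (g : W →L[ℝ] ℝ) {ε : ℝ} (hε : 0 < ε) : ∃ x : W, ‖x‖ ≤ 1 ∧ ‖g‖ - ε ≤ g x := by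
  rcases lt_or_ge (‖g‖ - ε) 0 with h | h
  · exact ⟨0, by simp, by simpa using h.le⟩
  · have hlt : ‖g‖ - ε < ‖g‖ := by linarith
    obtain ⟨x, hx1, hx2⟩ := g.exists_lt_apply_of_lt_opNorm hlt
    rcases le_or_gt 0 (g x) with hgx | hgx
    · refine ⟨x, hx1.le, ?_⟩
      rw [Real.norm_eq_abs, abs_of_nonneg hgx] at hx2; linarith
    · refine ⟨-x, by simpa using hx1.le, ?_⟩
      rw [map_neg]
      rw [Real.norm_eq_abs, abs_of_neg hgx] at hx2; linarith

lemma ms_dual_sq (q₁ : StrongDual ℝ X) (q₂ : StrongDual ℝ (StrongDual ℝ X)) (α : ℝ)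
    (h : ∀ (y₁ : X) (y₂ : StrongDual ℝ X), q₁ y₁ + q₂ y₂ - (‖y₁‖ ^ 2 + ‖y₂‖ ^ 2) / 2 ≤ α) :
    (‖q₁‖ ^ 2 + ‖q₂‖ ^ 2) / 2 ≤ α := by
  have key : ∀ ε : ℝ, 0 < ε → (‖q₁‖ ^ 2 + ‖q₂‖ ^ 2) / 2 ≤ α + ε * (‖q₁‖ + ‖q₂‖) := by
    intro ε hε
    obtain ⟨x₁, hx₁, hgx₁⟩ := ms_exists_near q₁ hε
    obtain ⟨x₂, hx₂, hgx₂⟩ := ms_exists_near q₂ hε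
    have h1 : ‖q₁‖ * (‖q₁‖ - ε) ≤ q₁ (‖q₁‖ • x₁) := by
      rw [map_smul, smul_eq_mul]
      exact mul_le_mul_of_nonneg_left hgx₁ (norm_nonneg _)
    have h2 : ‖q₂‖ * (‖q₂‖ - ε) ≤ q₂ (‖q₂‖ • x₂) := by
      rw [map_smul, smul_eq_mul]
      exact mul_le_mul_of_nonneg_left hgx₂ (norm_nonneg q₂)
    have n1 : ‖(‖q₁‖ • x₁)‖ ≤ ‖q₁‖ := by
      rw [norm_smul, Real.norm_eq_abs, abs_of_nonneg (norm_nonneg _)]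
      nlinarith [norm_nonneg q₁]
    have n2 : ‖(‖q₂‖ • x₂)‖ ≤ ‖q₂‖ := by
      rw [norm_smul, Real.norm_eq_abs, abs_of_nonneg (norm_nonneg q₂)]
      nlinarith [norm_nonneg q₂]
    have := h (‖q₁‖ • x₁) (‖q₂‖ • x₂)
    have hn1 : ‖(‖q₁‖ • x₁)‖ ^ 2 ≤ ‖q₁‖ ^ 2 := by nlinarith [norm_nonneg (‖q₁‖ • x₁)]
    have hn2 : ‖(‖q₂‖ • x₂)‖ ^ 2 ≤ ‖q₂‖ ^ 2 := by nlinarith [norm_nonneg (‖q₂‖ • x₂)]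
    nlinarith
  refine le_of_forall_pos_le_add fun δ hδ => ?_
  rcases eq_or_lt_of_le (by positivity : (0:ℝ) ≤ ‖q₁‖ + ‖q₂‖) with hS | hS
  · have := key 1 one_pos
    rw [← hS] at this
    linarith
  · have := key (δ / (‖q₁‖ + ‖q₂‖)) (by positivity)
    rw [div_mul_cancel₀] at this
    · linarith
    · exact ne_of_gt hS

lemma ms_quad {a A1 A2 N : ℝ} (ha : 0 ≤ a) (hA1 : 0 ≤ A1) (hA2 : 0 ≤ A2) (hN : 0 ≤ N)
    (hN2 : N ^ 2 = A1 ^ 2 + A2 ^ 2) (h : 0 ≤ A1 * A2 + a * A2 + a * A1 - a ^ 2) :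
    (Real.sqrt 2 - 1) * (Real.sqrt 2 * a) ≤ N := by
  set s := Real.sqrt 2 with hs_def
  have hs : s ^ 2 = 2 := Real.sq_sqrt (by norm_num)
  have hs0 : 0 ≤ s := Real.sqrt_nonneg 2
  have hs2 : s ≤ 2 := by nlinarith
  have hs1 : 1 ≤ s := by nlinarith
  have hA1N : A1 ≤ N := by nlinarith
  have hA2N : A2 ≤ N := by nlinarith
  have hsum : A1 + A2 ≤ s * N := by nlinarith [sq_nonneg (A1 - A2), sq_nonneg (A1 + A2 - s * N), mul_nonneg hs0 hN]
  have hprod : A1 * A2 ≤ N ^ 2 / 2 := by nlinarith [sq_nonneg (A1 - A2)]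
  have hkey : a ^ 2 ≤ N ^ 2 / 2 + s * N * a := by nlinarith [mul_le_mul_of_nonneg_left hsum ha]
  have final : (2 - s) * a ≤ N := by
    by_contra h'
    push_neg at h'
    have hA : 0 < a := by nlinarith
    nlinarith [mul_pos (by nlinarith : (0:ℝ) < (2 - s) * a - N) hA, mul_nonneg hs0 hN]
  calc (s - 1) * (s * a) = (2 - s) * a := by nlinarith [hs]
  _ ≤ N := final

/-- per-point lower bound for the conjugate. -/
lemma ms_coe_le_conj (f : X × StrongDual ℝ X → EReal) (hne_bot : ∀ z, f z ≠ ⊥)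
    (r : StrongDual ℝ X × StrongDual ℝ (StrongDual ℝ X)) (w : X × StrongDual ℝ X) {ρ : ℝ} (hρ : f w = (ρ : EReal)) :
    ((r.1 w.1 + r.2 w.2 - ρ : ℝ) : EReal) ≤ conjF X f r := by
  have : ((r.1 w.1 + r.2 w.2 - ρ : ℝ) : EReal) = ((r.1 w.1 + r.2 w.2 : ℝ) : EReal) - f w := by
    rw [hρ, ← EReal.coe_sub]
  rw [this]
  exact le_iSup (fun w => ((r.1 w.1 + r.2 w.2 : ℝ) : EReal) - f w) w

lemma ms_conj_le (f : X × StrongDual ℝ X → EReal) (hne_bot : ∀ z, f z ≠ ⊥)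
    (r : StrongDual ℝ X × StrongDual ℝ (StrongDual ℝ X)) (K : ℝ)
    (h : ∀ w : X × StrongDual ℝ X, ∀ ρ : ℝ, f w = (ρ : EReal) → r.1 w.1 + r.2 w.2 - ρ ≤ K) :
    conjF X f r ≤ (K : EReal) := by
  refine iSup_le fun w => ?_
  rcases eq_or_ne (f w) ⊤ with hw | hw
  · rw [hw, EReal.sub_top]; exact bot_le
  · have hρ : f w = (((f w).toReal : ℝ) : EReal) := (EReal.coe_toReal hw (hne_bot w)).symm
    rw [hρ, ← EReal.coe_sub]
    exact EReal.coe_le_coe_iff.2 (h w _ hρ)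

lemma ms_conj_combo (f : X × StrongDual ℝ X → EReal) (hne_bot : ∀ z, f z ≠ ⊥)
    {pA pB : StrongDual ℝ X × StrongDual ℝ (StrongDual ℝ X)} {QA QB : ℝ}
    (hA : conjF X f pA ≤ (QA : EReal)) (hB : conjF X f pB ≤ (QB : EReal))
    {a b : ℝ} (ha : 0 ≤ a) (hb : 0 ≤ b) (hab : a + b = 1) :
    conjF X f (a • pA + b • pB) ≤ ((a * QA + b * QB : ℝ) : EReal) := by
  refine ms_conj_le f hne_bot _ _ fun w ρ hρ => ?_
  have hwA : pA.1 w.1 + pA.2 w.2 - ρ ≤ QA :=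
    EReal.coe_le_coe_iff.1 ((ms_coe_le_conj f hne_bot pA w hρ).trans hA)
  have hwB : pB.1 w.1 + pB.2 w.2 - ρ ≤ QB :=
    EReal.coe_le_coe_iff.1 ((ms_coe_le_conj f hne_bot pB w hρ).trans hB)
  have hexp : (a • pA + b • pB).1 w.1 + (a • pA + b • pB).2 w.2
      = a * (pA.1 w.1 + pA.2 w.2) + b * (pB.1 w.1 + pB.2 w.2) := by
    simp only [Prod.fst_add, Prod.snd_add, Prod.smul_fst, Prod.smul_snd,
      ContinuousLinearMap.add_apply, ContinuousLinearMap.coe_smul', Pi.smul_apply,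
      smul_eq_mul]
    ring
  rw [hexp]
  have hr : a * ρ + b * ρ = ρ := by rw [← add_mul, hab, one_mul]
  nlinarith [mul_le_mul_of_nonneg_left hwA ha, mul_le_mul_of_nonneg_left hwB hb]

lemma ms_sq_combo {a b c n n' : ℝ} (ha : 0 ≤ a) (hb : 0 ≤ b) (hab : a + b = 1)
    (hn : 0 ≤ n) (hn' : 0 ≤ n') (hc : 0 ≤ c) (h : c ≤ a * n + b * n') :
    c ^ 2 ≤ a * n ^ 2 + b * n' ^ 2 := by
  have h2 : c ^ 2 ≤ (a * n + b * n') ^ 2 := by nlinarith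
  nlinarith [mul_nonneg (mul_nonneg ha hb) (sq_nonneg (n - n'))]

set_option maxHeartbeats 1000000 in
lemma ms_key (f : X × StrongDual ℝ X → EReal)
    (hne_bot : ∀ z, f z ≠ ⊥) (hproper : ∃ z, f z ≠ ⊤)
    (hconv : Convex ℝ {p : (X × StrongDual ℝ X) × ℝ | f p.1 ≤ (p.2 : EReal)})
    (hge : ∀ z, ((coup X z : ℝ) : EReal) ≤ f z)
    (z : X × StrongDual ℝ X) :
    ∃ (zs : StrongDual ℝ X × StrongDual ℝ (StrongDual ℝ X)) (κ : ℝ),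
      (∀ w : X × StrongDual ℝ X, ((κ + zs.1 w.1 + zs.2 w.2 : ℝ) : EReal) ≤ f w) ∧
      (‖z.2 - zs.1‖ ^ 2 + ‖inclusionInDoubleDual ℝ X z.1 - zs.2‖ ^ 2) / 2
        ≤ zs.1 z.1 + zs.2 z.2 - coup X z + κ := by
  classical
  set φ : X × StrongDual ℝ X → ℝ := fun w =>
    coup X z + z.2 (w.1 - z.1) + (w.2 - z.2) z.1
      - (‖w.1 - z.1‖ ^ 2 + ‖w.2 - z.2‖ ^ 2) / 2 with hφ_def
  set C1 : Set ((X × StrongDual ℝ X) × ℝ) := {p | f p.1 ≤ (p.2 : EReal)} with hC1_def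
  set C2 : Set ((X × StrongDual ℝ X) × ℝ) := {p | p.2 < φ p.1} with hC2_def
  -- continuity of φ
  have hφc : Continuous φ := by
    have h1 : Continuous fun w : X × StrongDual ℝ X => w.1 - z.1 :=
      continuous_fst.sub continuous_const
    have h2 : Continuous fun w : X × StrongDual ℝ X => w.2 - z.2 :=
      continuous_snd.sub continuous_const
    have e1 : Continuous fun w : X × StrongDual ℝ X => z.2 (w.1 - z.1) := z.2.continuous.comp h1
    have e2 : Continuous fun w : X × StrongDual ℝ X => (w.2 - z.2) z.1 :=
      (ContinuousLinearMap.apply ℝ ℝ z.1).continuous.comp h2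
    have e3 : Continuous fun w : X × StrongDual ℝ X =>
        (‖w.1 - z.1‖ ^ 2 + ‖w.2 - z.2‖ ^ 2) / 2 :=
      ((h1.norm.pow 2).add (h2.norm.pow 2)).div_const 2
    exact ((continuous_const.add e1).add e2).sub e3
  have hC2open : IsOpen C2 := isOpen_lt continuous_snd (hφc.comp continuous_fst)
  -- convexity of C2
  have hC2conv : Convex ℝ C2 := by
    rintro ⟨p, r⟩ hp ⟨q, r'⟩ hq a b ha hb hab
    simp only [hC2_def, Set.mem_setOf_eq] at hp hq ⊢
    have key : ∀ (w w' : X × StrongDual ℝ X), a • (w, r) + b • ((w', r') : (X × StrongDual ℝ X) × ℝ)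
        = (a • w + b • w', a * r + b * r') := fun _ _ => rfl
    -- components
    have hcomp1 : (a • p + b • q).1 - z.1 = a • (p.1 - z.1) + b • (q.1 - z.1) := by
      have hP : (a • p + b • q).1 = a • p.1 + b • q.1 := rfl
      have h1 : a • (p.1 - z.1) + b • (q.1 - z.1) = a • p.1 + b • q.1 - (a + b) • z.1 := by
        rw [smul_sub, smul_sub, add_smul]; abel
      rw [hP, h1, hab, one_smul]
    have hcomp2 : (a • p + b • q).2 - z.2 = a • (p.2 - z.2) + b • (q.2 - z.2) := by
      have hP : (a • p + b • q).2 = a • p.2 + b • q.2 := rfl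
      have h1 : a • (p.2 - z.2) + b • (q.2 - z.2) = a • p.2 + b • q.2 - (a + b) • z.2 := by
        rw [smul_sub, smul_sub, add_smul]; abel
      rw [hP, h1, hab, one_smul]
    set y1 := p.1 - z.1; set y1' := q.1 - z.1
    set y2 := p.2 - z.2; set y2' := q.2 - z.2
    have hlin1 : z.2 ((a • p + b • q).1 - z.1) = a * z.2 y1 + b * z.2 y1' := by
      rw [hcomp1, map_add, map_smul, map_smul]; simp [smul_eq_mul]
    have hlin2 : ((a • p + b • q).2 - z.2) z.1 = a * y2 z.1 + b * y2' z.1 := by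
      rw [hcomp2]; simp [ContinuousLinearMap.add_apply, ContinuousLinearMap.coe_smul',
        Pi.smul_apply, smul_eq_mul]
    have hq1 : ‖(a • p + b • q).1 - z.1‖ ^ 2 ≤ a * ‖y1‖ ^ 2 + b * ‖y1'‖ ^ 2 := by
      refine ms_sq_combo ha hb hab (norm_nonneg _) (norm_nonneg _) (norm_nonneg _) ?_
      rw [hcomp1]
      refine (norm_add_le _ _).trans ?_
      rw [norm_smul, norm_smul, Real.norm_eq_abs, Real.norm_eq_abs,
        abs_of_nonneg ha, abs_of_nonneg hb]
    have hq2 : ‖(a • p + b • q).2 - z.2‖ ^ 2 ≤ a * ‖y2‖ ^ 2 + b * ‖y2'‖ ^ 2 := by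
      refine ms_sq_combo ha hb hab (norm_nonneg _) (norm_nonneg _) (norm_nonneg _) ?_
      rw [hcomp2]
      refine (norm_add_le _ _).trans ?_
      rw [norm_smul, norm_smul, Real.norm_eq_abs, Real.norm_eq_abs,
        abs_of_nonneg ha, abs_of_nonneg hb]
    -- strict combination
    have hstrict : a * r + b * r' < a * φ p + b * φ q := by
      rcases eq_or_lt_of_le ha with ha0 | ha0
      · have hb1 : b = 1 := by linarith
        rw [← ha0, hb1]; simpa using hq
      · have h1 : a * r < a * φ p := mul_lt_mul_of_pos_left hp ha0
        have h2 : b * r' ≤ b * φ q := mul_le_mul_of_nonneg_left hq.le hb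
        linarith
    have hφcombo : a * φ p + b * φ q ≤ φ (a • p + b • q) := by
      simp only [hφ_def]
      rw [hlin1, hlin2]
      have hcz : a * coup X z + b * coup X z = coup X z := by
        rw [← add_mul, hab, one_mul]
      linarith [hq1, hq2]
    calc (a • (p, r) + b • (q, r')).2 = a * r + b * r' := rfl
    _ < a * φ p + b * φ q := hstrict
    _ ≤ φ (a • p + b • q) := hφcombo
  -- disjointness
  have hφ_le : ∀ w : X × StrongDual ℝ X, φ w ≤ coup X w := by
    intro w
    have hyy : (w.2 - z.2) (w.1 - z.1) = coup X w - w.2 z.1 - z.2 w.1 + coup X z := by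
      simp [coup, ContinuousLinearMap.sub_apply, map_sub]; ring
    have habs := (w.2 - z.2).le_opNorm (w.1 - z.1)
    rw [Real.norm_eq_abs] at habs
    have hlow : -(‖w.2 - z.2‖ * ‖w.1 - z.1‖) ≤ (w.2 - z.2) (w.1 - z.1) := by
      have h1 := neg_abs_le ((w.2 - z.2) (w.1 - z.1))
      linarith
    have hAM : ‖w.2 - z.2‖ * ‖w.1 - z.1‖ ≤ (‖w.1 - z.1‖ ^ 2 + ‖w.2 - z.2‖ ^ 2) / 2 := by
      nlinarith [sq_nonneg (‖w.1 - z.1‖ - ‖w.2 - z.2‖)]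
    have hexp : z.2 (w.1 - z.1) = z.2 w.1 - coup X z := by
      simp [coup, map_sub]
    have hexp2 : (w.2 - z.2) z.1 = w.2 z.1 - coup X z := by
      simp [coup, ContinuousLinearMap.sub_apply]
    simp only [hφ_def]
    rw [hexp, hexp2]
    nlinarith [hlow, hAM, hyy]
  have hdisj : Disjoint C2 C1 := by
    rw [Set.disjoint_left]
    rintro ⟨w, r⟩ h2 h1
    simp only [hC2_def, Set.mem_setOf_eq] at h2
    simp only [hC1_def, Set.mem_setOf_eq] at h1
    have : ((coup X w : ℝ) : EReal) ≤ (r : EReal) := (hge w).trans h1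
    rw [EReal.coe_le_coe_iff] at this
    have := hφ_le w
    linarith
  -- separation
  obtain ⟨F, u, hF2, hF1⟩ := geometric_hahn_banach_open hC2conv hC2open hconv hdisj
  set ℓ : (X × StrongDual ℝ X) →L[ℝ] ℝ := F.comp (ContinuousLinearMap.inl ℝ _ _) with hℓ_def
  set β : ℝ := F (0, 1) with hβ_def
  have hFsplit : ∀ (w : X × StrongDual ℝ X) (r : ℝ), F (w, r) = ℓ w + r * β := by
    intro w r
    have hdecomp : ((w, r) : (X × StrongDual ℝ X) × ℝ) = (w, 0) + r • ((0 : X × StrongDual ℝ X), (1 : ℝ)) := by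
      simp [Prod.ext_iff]
    rw [hdecomp, map_add, map_smul]
    simp [hℓ_def, hβ_def, smul_eq_mul, mul_comm]
  have hzmem : ∀ r : ℝ, r < coup X z → ((z, r) : (X × StrongDual ℝ X) × ℝ) ∈ C2 := by
    intro r hr
    simp only [hC2_def, Set.mem_setOf_eq, hφ_def]
    simpa using hr
  obtain ⟨z₀, hz₀⟩ := hproper
  have hz₀mem : ((z₀, (f z₀).toReal) : (X × StrongDual ℝ X) × ℝ) ∈ C1 := by
    simp only [hC1_def, Set.mem_setOf_eq]
    rw [EReal.coe_toReal hz₀ (hne_bot z₀)]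
  have hβ0 : 0 ≤ β := by
    by_contra h
    push_neg at h
    set r := min (coup X z - 1) ((u + 1 - ℓ z) / β) with hr_def
    have hmem := hzmem r (by
      have : r ≤ coup X z - 1 := min_le_left _ _
      linarith)
    have hFlt := hF2 _ hmem
    rw [hFsplit] at hFlt
    have : r ≤ (u + 1 - ℓ z) / β := min_le_right _ _
    have hrb : u + 1 - ℓ z ≤ r * β := by
      rw [← div_mul_cancel₀ (u + 1 - ℓ z) (ne_of_lt h)]
      exact mul_le_mul_of_nonpos_right this h.le
    linarith
  have hβne : β ≠ 0 := by
    intro h0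
    have hall : ∀ w : X × StrongDual ℝ X, ℓ w < u := by
      intro w
      have hmem : ((w, φ w - 1) : (X × StrongDual ℝ X) × ℝ) ∈ C2 := by
        simp [hC2_def]
      have := hF2 _ hmem
      rw [hFsplit, h0, mul_zero, add_zero] at this
      exact this
    have h1 := hF1 _ hz₀mem
    rw [hFsplit, h0, mul_zero, add_zero] at h1
    exact absurd (hall z₀) (not_lt.2 h1)
  have hβpos : 0 < β := lt_of_le_of_ne hβ0 (Ne.symm hβne)
  -- lower bound from C1 side
  have hlow : ∀ w : X × StrongDual ℝ X, (((u - ℓ w) / β : ℝ) : EReal) ≤ f w := by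
    intro w
    rcases eq_or_ne (f w) ⊤ with hw | hw
    · rw [hw]; exact le_top
    · have hρ : f w = (((f w).toReal : ℝ) : EReal) := (EReal.coe_toReal hw (hne_bot w)).symm
      have hmem : ((w, (f w).toReal) : (X × StrongDual ℝ X) × ℝ) ∈ C1 := by
        simp only [hC1_def, Set.mem_setOf_eq]
        rw [EReal.coe_toReal hw (hne_bot w)]
      have := hF1 _ hmem
      rw [hFsplit] at this
      rw [hρ]
      exact EReal.coe_le_coe_iff.2 (by rw [div_le_iff₀ hβpos]; linarith)
  -- upper bound from C2 side
  have hup : ∀ w : X × StrongDual ℝ X, φ w ≤ (u - ℓ w) / β := by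
    intro w
    rw [le_div_iff₀ hβpos]
    have : ∀ ε : ℝ, 0 < ε → φ w * β ≤ u - ℓ w + ε * β := by
      intro ε hε
      have hmem : ((w, φ w - ε) : (X × StrongDual ℝ X) × ℝ) ∈ C2 := by
        simp [hC2_def]; linarith
      have := hF2 _ hmem
      rw [hFsplit] at this
      nlinarith
    refine le_of_forall_pos_le_add fun ε hε => ?_
    have hd := this (ε / β) (by positivity)
    rw [div_mul_cancel₀ _ hβne] at hd
    linarith
  -- construct zs
  set p1 : StrongDual ℝ X := -β⁻¹ • (ℓ.comp (ContinuousLinearMap.inl ℝ X (StrongDual ℝ X))) with hp1_def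
  set p2 : StrongDual ℝ (StrongDual ℝ X) := -β⁻¹ • (ℓ.comp (ContinuousLinearMap.inr ℝ X (StrongDual ℝ X))) with hp2_def
  have hℓdecomp : ∀ w : X × StrongDual ℝ X, ℓ w = ℓ (w.1, 0) + ℓ (0, w.2) := by
    intro w
    rw [← map_add]
    congr 1
    simp [Prod.ext_iff]
  have hzsw : ∀ w : X × StrongDual ℝ X, p1 w.1 + p2 w.2 = -(ℓ w) / β := by
    intro w
    simp only [hp1_def, hp2_def, ContinuousLinearMap.coe_smul', Pi.smul_apply,
      ContinuousLinearMap.comp_apply, ContinuousLinearMap.inl_apply,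
      ContinuousLinearMap.inr_apply, smul_eq_mul]
    rw [hℓdecomp w]
    field_simp
    ring
  refine ⟨(p1, p2), u / β, ?_, ?_⟩
  · intro w
    have : (u / β + (p1, p2).1 w.1 + (p1, p2).2 w.2 : ℝ) = (u - ℓ w) / β := by
      show u / β + p1 w.1 + p2 w.2 = (u - ℓ w) / β
      rw [add_assoc, hzsw w]
      field_simp
      ring
    rw [this]
    exact hlow w
  · -- the norm bound, via ms_dual_sq
    show (‖z.2 - p1‖ ^ 2 + ‖inclusionInDoubleDual ℝ X z.1 - p2‖ ^ 2) / 2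
      ≤ p1 z.1 + p2 z.2 - coup X z + u / β
    apply ms_dual_sq
    intro y1 y2
    have hw := (hup (z.1 + y1, z.2 + y2)).trans (by
      have := hzsw (z.1 + y1, z.2 + y2)
      have heq : (u - ℓ (z.1 + y1, z.2 + y2)) / β
          = u / β + p1 (z.1 + y1) + p2 (z.2 + y2) := by
        rw [add_assoc, this]
        field_simp
        ring
      exact le_of_eq heq)
    simp only [hφ_def] at hw
    simp only [add_sub_cancel_left] at hw
    have e1 : p1 (z.1 + y1) = p1 z.1 + p1 y1 := map_add _ _ _
    have e2 : p2 (z.2 + y2) = p2 z.2 + p2 y2 := map_add _ _ _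
    have e3 : (z.2 - p1) y1 = z.2 y1 - p1 y1 := rfl
    have e4 : (inclusionInDoubleDual ℝ X z.1 - p2) y2 = y2 z.1 - p2 y2 := by
      simp [ContinuousLinearMap.sub_apply, dual_def]
    rw [e3, e4]
    rw [e1, e2] at hw
    linarith

/-- Passing to the limit `t → 0⁺` in the segment estimate. -/
lemma ms_eps {P Qs cz s : ℝ}
    (hstep : ∀ t : ℝ, 0 < t → t ≤ 1 → (1 - t) * (P - Qs) + t * cz ≤ s) :
    P - Qs ≤ s := by
  refine le_of_forall_pos_le_add fun ε hε => ?_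
  set C : ℝ := P - Qs - cz with hC_def
  set t : ℝ := min 1 (ε / (|C| + 1)) with ht_def
  have ht0 : 0 < t := lt_min one_pos (by positivity)
  have ht1 : t ≤ 1 := min_le_left _ _
  have h := hstep t ht0 ht1
  have htC : t * C ≤ ε := by
    calc t * C ≤ t * |C| := mul_le_mul_of_nonneg_left (le_abs_self C) ht0.le
    _ ≤ (ε / (|C| + 1)) * |C| :=
        mul_le_mul_of_nonneg_right (min_le_right _ _) (abs_nonneg C)
    _ ≤ ε := by
        rw [div_mul_eq_mul_div, div_le_iff₀ (by positivity)]
        nlinarith [abs_nonneg C]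
  have hexp : (1 - t) * (P - Qs) + t * cz = (P - Qs) - t * C := by
    rw [hC_def]; ring
  rw [hexp] at h
  linarith

/-- Monotonicity of the set `M_{f*}`. -/
lemma ms_mono (f : X × StrongDual ℝ X → EReal) (hne_bot : ∀ z, f z ≠ ⊥)
    (hgeS : ∀ p, ((coupS X p : ℝ) : EReal) ≤ conjF X f p)
    {p q : StrongDual ℝ X × StrongDual ℝ (StrongDual ℝ X)}
    (hp : conjF X f p = ((coupS X p : ℝ) : EReal))
    (hq : conjF X f q = ((coupS X q : ℝ) : EReal)) :
    0 ≤ (p.2 - q.2) (p.1 - q.1) := by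
  have hcombo := ms_conj_combo f hne_bot (le_of_eq hp) (le_of_eq hq)
    (by norm_num : (0:ℝ) ≤ 1/2) (by norm_num : (0:ℝ) ≤ 1/2) (by norm_num)
  have hmid := EReal.coe_le_coe_iff.1 ((hgeS _).trans hcombo)
  have hmid_eq : coupS X ((1/2 : ℝ) • p + (1/2 : ℝ) • q)
      = 1/4 * (coupS X p + (p.2 q.1 + q.2 p.1) + coupS X q) := by
    simp only [coupS, Prod.fst_add, Prod.snd_add, Prod.smul_fst,
      Prod.smul_snd, ContinuousLinearMap.add_apply, ContinuousLinearMap.coe_smul',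
      Pi.smul_apply, map_add, map_smul, smul_eq_mul]
    ring
  rw [hmid_eq] at hmid
  have hexp : (p.2 - q.2) (p.1 - q.1)
      = coupS X p - (p.2 q.1 + q.2 p.1) + coupS X q := by
    simp only [coupS, ContinuousLinearMap.sub_apply, map_sub]
    ring
  rw [hexp]
  linarith

/-- The `(√2 - 1)`-distance estimate, given monotonicity and the alignment of `v`. -/
lemma ms_dist (v u : StrongDual ℝ X × StrongDual ℝ (StrongDual ℝ X)) (hvv : ‖v.1‖ = ‖v.2‖)
    (hqv : v.2 v.1 = -(‖v.1‖ ^ 2)) (hmono : 0 ≤ (u.2 - v.2) (u.1 - v.1)) :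
    (Real.sqrt 2 - 1) * nrm2 v ≤ nrm2 u := by
  set a : ℝ := ‖v.1‖ with ha_def
  set A1 : ℝ := ‖u.1‖ with hA1_def
  set A2 : ℝ := ‖u.2‖ with hA2_def
  have ha0 : 0 ≤ a := norm_nonneg _
  have hexp : (u.2 - v.2) (u.1 - v.1) = u.2 u.1 - u.2 v.1 - v.2 u.1 + v.2 v.1 := by
    simp only [ContinuousLinearMap.sub_apply, map_sub]
    ring
  have hb1 : u.2 u.1 ≤ A2 * A1 := by
    have h1 := u.2.le_opNorm u.1
    rw [Real.norm_eq_abs] at h1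
    have h2 := le_abs_self (u.2 u.1)
    rw [← hA1_def, ← hA2_def] at h1
    linarith
  have hb2 : -(A2 * a) ≤ u.2 v.1 := by
    have h1 := u.2.le_opNorm v.1
    rw [Real.norm_eq_abs] at h1
    have h2 := neg_abs_le (u.2 v.1)
    rw [← ha_def, ← hA2_def] at h1
    linarith
  have hb3 : -(a * A1) ≤ v.2 u.1 := by
    have h1 := v.2.le_opNorm u.1
    rw [Real.norm_eq_abs] at h1
    have h2 := neg_abs_le (v.2 u.1)
    rw [← hA1_def, ← hvv] at h1
    linarith
  have hfact : 0 ≤ A1 * A2 + a * A2 + a * A1 - a ^ 2 := by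
    rw [hexp, hqv] at hmono
    linarith
  have hTv : nrm2 v = Real.sqrt 2 * a := by
    have h1 : ‖v.1‖ ^ 2 + ‖v.2‖ ^ 2 = 2 * a ^ 2 := by rw [← hvv, ← ha_def]; ring
    rw [nrm2, h1, Real.sqrt_mul (by norm_num) (a ^ 2), Real.sqrt_sq ha0]
  have hNdef : nrm2 u = Real.sqrt (A1 ^ 2 + A2 ^ 2) := rfl
  have hN0 : 0 ≤ nrm2 u := Real.sqrt_nonneg _
  have hN2 : nrm2 u ^ 2 = A1 ^ 2 + A2 ^ 2 := by
    rw [hNdef]; exact Real.sq_sqrt (by positivity)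
  rw [hTv]
  exact ms_quad ha0 (norm_nonneg u.1) (norm_nonneg u.2) hN0 hN2 hfact

/-- The segment (convexity) estimate giving `P - Qs ≤ s`. -/
lemma ms_segment (f : X × StrongDual ℝ X → EReal) (hne_bot : ∀ z, f z ≠ ⊥)
    (hgeS : ∀ p, ((coupS X p : ℝ) : EReal) ≤ conjF X f p)
    (z : X × StrongDual ℝ X) {zs : StrongDual ℝ X × StrongDual ℝ (StrongDual ℝ X)}
    (hMzs : conjF X f zs = ((coupS X zs : ℝ) : EReal)) {s : ℝ}
    (hfs : conjF X f (hatz X z) = ((s : ℝ) : EReal)) :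
    zs.1 z.1 + zs.2 z.2 - coupS X zs ≤ s := by
  refine ms_eps (cz := coup X z) fun t ht0 ht1 => ?_
  have hcombo := ms_conj_combo f hne_bot (le_of_eq hMzs) (le_of_eq hfs)
    (by linarith : (0:ℝ) ≤ 1 - t) ht0.le (by ring)
  have hreal := EReal.coe_le_coe_iff.1 ((hgeS _).trans hcombo)
  have hcoupS_rt : coupS X ((1 - t) • zs + t • hatz X z)
      = (1 - t) ^ 2 * coupS X zs + (1 - t) * t * (zs.1 z.1 + zs.2 z.2)
        + t ^ 2 * coup X z := by
    simp only [coupS, coup, hatz, Prod.fst_add, Prod.snd_add,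
      Prod.smul_fst, Prod.smul_snd, ContinuousLinearMap.add_apply,
      ContinuousLinearMap.coe_smul', Pi.smul_apply, map_add, map_smul, smul_eq_mul,
      dual_def]
    ring
  rw [hcoupS_rt] at hreal
  have hm : t * ((1 - t) * ((zs.1 z.1 + zs.2 z.2) - coupS X zs) + t * coup X z)
      ≤ t * s := by linarith [hreal]
  exact le_of_mul_le_mul_left hm ht0

set_option maxHeartbeats 1000000 in
/-- The main existence statement: `z* ∈ M_{f*}` aligned with `ẑ` and quantitatively close. -/
lemma ms_A (f : X × StrongDual ℝ X → EReal)
    (hne_bot : ∀ z, f z ≠ ⊥) (hproper : ∃ z, f z ≠ ⊤)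
    (hconv : Convex ℝ {p : (X × StrongDual ℝ X) × ℝ | f p.1 ≤ (p.2 : EReal)})
    (hge : ∀ z, ((coup X z : ℝ) : EReal) ≤ f z)
    (hgeS : ∀ p, ((coupS X p : ℝ) : EReal) ≤ conjF X f p)
    (z : X × StrongDual ℝ X) :
    ∃ zs : StrongDual ℝ X × StrongDual ℝ (StrongDual ℝ X),
      conjF X f zs = ((coupS X zs : ℝ) : EReal) ∧
      ‖(hatz X z - zs).1‖ ^ 2 = ‖(hatz X z - zs).2‖ ^ 2 ∧
      ‖(hatz X z - zs).1‖ ^ 2 = -((hatz X z - zs).2 (hatz X z - zs).1) ∧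
      ((nrm2 (hatz X z - zs) ^ 2 : ℝ) : EReal)
        ≤ 2 * (conjF X f (hatz X z) - ((coupS X (hatz X z) : ℝ) : EReal)) := by
  classical
  obtain ⟨zs, κ, hA, hB⟩ := ms_key f hne_bot hproper hconv hge z
  refine ⟨zs, ?_⟩
  set cz : ℝ := coup X z with hcz_def
  set P : ℝ := zs.1 z.1 + zs.2 z.2 with hP_def
  set Qs : ℝ := coupS X zs with hQs_def
  set v1 : StrongDual ℝ X := z.2 - zs.1 with hv1_def
  set v2 : StrongDual ℝ (StrongDual ℝ X) := inclusionInDoubleDual ℝ X z.1 - zs.2 with hv2_def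
  set a : ℝ := ‖v1‖ with ha_def
  set b : ℝ := ‖v2‖ with hb_def
  set qv : ℝ := v2 v1 with hqv_def
  have ha0 : 0 ≤ a := norm_nonneg _
  have hb0 : 0 ≤ b := norm_nonneg v2
  have hv1 : (hatz X z - zs).1 = v1 := rfl
  have hv2 : (hatz X z - zs).2 = v2 := rfl
  have hn2 : nrm2 (hatz X z - zs) = Real.sqrt (a ^ 2 + b ^ 2) := rfl
  clear_value cz P Qs a b qv
  have hconj_le : conjF X f zs ≤ ((-κ : ℝ) : EReal) := by
    refine ms_conj_le f hne_bot zs (-κ) fun w ρ hρ => ?_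
    have h1 := hA w
    rw [hρ] at h1
    have h2 := EReal.coe_le_coe_iff.1 h1
    linarith
  have hQs_le : Qs ≤ -κ := by
    refine EReal.coe_le_coe_iff.1 ?_
    rw [hQs_def]
    exact (hgeS zs).trans hconj_le
  have hqv_eq : qv = cz - P + Qs := by
    rw [hqv_def]
    simp only [hv1_def, hv2_def, hcz_def, hP_def, hQs_def, coup, coupS,
      ContinuousLinearMap.sub_apply, map_sub, dual_def]
    ring
  have hB' : (a ^ 2 + b ^ 2) / 2 ≤ P - cz + κ := hB
  have hqv_le : qv ≤ -((a ^ 2 + b ^ 2) / 2) := by rw [hqv_eq]; linarith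
  have hqv_ge : -(b * a) ≤ qv := by
    have h1 := v2.le_opNorm v1
    rw [Real.norm_eq_abs] at h1
    have h2 := neg_abs_le (v2 v1)
    rw [← ha_def, ← hb_def] at h1
    rw [hqv_def]
    linarith
  have hav : a = b := by
    have hsq : (a - b) ^ 2 ≤ 0 := by nlinarith [hqv_ge, hqv_le]
    have h2 : (a - b) ^ 2 = 0 := le_antisymm hsq (sq_nonneg _)
    have h3 : a - b = 0 := pow_eq_zero_iff two_ne_zero |>.mp h2
    linarith
  have hqv : qv = -(a ^ 2) := by
    rw [hav] at hqv_le hqv_ge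
    apply le_antisymm
    · rw [hav]; linarith
    · rw [hav]; linarith
  have hQs_eq : Qs = P - cz + qv := by linarith [hqv_eq]
  have hnegκ_le : -κ ≤ Qs := by
    rw [hQs_eq, hqv, hav]
    rw [hav] at hB'
    linarith
  have hMzs : conjF X f zs = ((Qs : ℝ) : EReal) := by
    refine le_antisymm (hconj_le.trans (EReal.coe_le_coe_iff.2 hnegκ_le)) ?_
    rw [hQs_def]
    exact hgeS zs
  have hMzs' : conjF X f zs = ((coupS X zs : ℝ) : EReal) := by
    rw [← hQs_def]
    exact hMzs
  have hnrm_sq : nrm2 (hatz X z - zs) ^ 2 = a ^ 2 + b ^ 2 := by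
    rw [hn2]; exact Real.sq_sqrt (by positivity)
  have czS : coupS X (hatz X z) = cz := by
    simp [coupS, hatz, hcz_def, coup, dual_def]
  refine ⟨hMzs, ?_, ?_, ?_⟩
  · rw [hv1, hv2, ← ha_def, ← hb_def, hav]
  · rw [hv1, hv2, ← ha_def, ← hqv_def, hqv]
    ring
  rcases eq_or_ne (conjF X f (hatz X z)) ⊤ with htop | htop
  · have hRHS : 2 * (conjF X f (hatz X z) - ((coupS X (hatz X z) : ℝ) : EReal)) = ⊤ := by
      rw [htop, EReal.top_sub_coe]
      exact EReal.mul_top_of_pos (by norm_num)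
    rw [hRHS]
    exact le_top
  · have hbot : conjF X f (hatz X z) ≠ ⊥ := by
      intro h
      have h2 := (hgeS (hatz X z)).trans_eq h
      exact absurd h2 (by simp)
    set s : ℝ := (conjF X f (hatz X z)).toReal with hs_def
    have hfs : conjF X f (hatz X z) = ((s : ℝ) : EReal) := (EReal.coe_toReal htop hbot).symm
    have hRHS : 2 * (conjF X f (hatz X z) - ((coupS X (hatz X z) : ℝ) : EReal))
        = ((2 * (s - cz) : ℝ) : EReal) := by
      rw [hfs, czS]
      norm_cast
    have hPQs : P - Qs ≤ s := by
      rw [hP_def, hQs_def]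
      exact ms_segment f hne_bot hgeS z hMzs' hfs
    have hseg : a ^ 2 ≤ s - cz := by
      have hQs2 : Qs = P - cz - a ^ 2 := by rw [hQs_eq, hqv]; ring
      rw [hQs2] at hPQs
      linarith
    rw [hRHS]
    refine EReal.coe_le_coe_iff.2 ?_
    rw [hnrm_sq, ← hav]
    linarith

end MSAux

/-- for `f ∈ G(Z)` and `z ∈ Z` there is `z* ∈ M_{f*}` with
`ẑ - z* ∈ gph(-F_{X*})` and `‖ẑ - z*‖² ≤ 2(f*(ẑ) - c(ẑ))`; moreover
`(√2 - 1)‖ẑ - z*‖ ≤ d(ẑ, M_{f*})` and `d(ẑ, M_{f*})² ≤ 2(f*(ẑ) - c(ẑ))`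
(the latter expressing `d(ẑ, M_{f*}) ≤ √(2(f*(ẑ) - c(ẑ)))`). -/
theorem stmt2 {X : Type*} [NormedAddCommGroup X] [NormedSpace ℝ X] [CompleteSpace X]
    (f : X × StrongDual ℝ X → EReal)
    (hne_bot : ∀ z, f z ≠ ⊥) (hproper : ∃ z, f z ≠ ⊤)
    (hconv : Convex ℝ {p : (X × StrongDual ℝ X) × ℝ | f p.1 ≤ (p.2 : EReal)})
    (hge : ∀ z, ((coup X z : ℝ) : EReal) ≤ f z)
    (hgeS : ∀ p, ((coupS X p : ℝ) : EReal) ≤ conjF X f p)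
    (z : X × StrongDual ℝ X) :
    ∃ zs : StrongDual ℝ X × StrongDual ℝ (StrongDual ℝ X),
      conjF X f zs = ((coupS X zs : ℝ) : EReal) ∧
      ‖(hatz X z - zs).1‖ ^ 2 = ‖(hatz X z - zs).2‖ ^ 2 ∧
      ‖(hatz X z - zs).1‖ ^ 2 = -((hatz X z - zs).2 (hatz X z - zs).1) ∧
      ((nrm2 (hatz X z - zs) ^ 2 : ℝ) : EReal)
        ≤ 2 * (conjF X f (hatz X z) - ((coupS X (hatz X z) : ℝ) : EReal)) ∧
      (Real.sqrt 2 - 1) * nrm2 (hatz X z - zs)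
        ≤ sInf ((fun w => nrm2 (hatz X z - w)) ''
            {p : StrongDual ℝ X × StrongDual ℝ (StrongDual ℝ X) | conjF X f p = ((coupS X p : ℝ) : EReal)}) ∧
      ((sInf ((fun w => nrm2 (hatz X z - w)) ''
            {p : StrongDual ℝ X × StrongDual ℝ (StrongDual ℝ X) | conjF X f p = ((coupS X p : ℝ) : EReal)}) ^ 2
          : ℝ) : EReal)
        ≤ 2 * (conjF X f (hatz X z) - ((coupS X (hatz X z) : ℝ) : EReal)) := by
  classical
  obtain ⟨zs, h1, h2, h3, h4⟩ := ms_A f hne_bot hproper hconv hge hgeS z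
  set M : Set (StrongDual ℝ X × StrongDual ℝ (StrongDual ℝ X)) :=
    {p | conjF X f p = ((coupS X p : ℝ) : EReal)} with hM_def
  have hzsM : zs ∈ M := h1
  have himg_ne : ((fun w => nrm2 (hatz X z - w)) '' M).Nonempty := ⟨_, ⟨zs, hzsM, rfl⟩⟩
  have hbdd : BddBelow ((fun w => nrm2 (hatz X z - w)) '' M) := by
    refine ⟨0, ?_⟩
    rintro _ ⟨w, _, rfl⟩
    exact Real.sqrt_nonneg _
  have part5 : (Real.sqrt 2 - 1) * nrm2 (hatz X z - zs)
      ≤ sInf ((fun w => nrm2 (hatz X z - w)) '' M) := by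
    refine le_csInf himg_ne ?_
    rintro _ ⟨w, hwM, rfl⟩
    have hmono := ms_mono f hne_bot hgeS h1 hwM
    have hvv : ‖(hatz X z - zs).1‖ = ‖(hatz X z - zs).2‖ := by
      have h20 := h2
      have hge1 : (0:ℝ) ≤ ‖(hatz X z - zs).1‖ := norm_nonneg _
      have hge2 : (0:ℝ) ≤ ‖(hatz X z - zs).2‖ := norm_nonneg (hatz X z - zs).2
      nlinarith
    refine ms_dist (hatz X z - zs) (hatz X z - w) hvv (by linarith [h3]) ?_
    have e1 : (hatz X z - w).1 - (hatz X z - zs).1 = zs.1 - w.1 := by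
      simp only [Prod.fst_sub]; abel
    have e2 : (hatz X z - w).2 - (hatz X z - zs).2 = zs.2 - w.2 := by
      simp only [Prod.snd_sub]; abel
    rw [e1, e2]
    exact hmono
  have hInf_le : sInf ((fun w => nrm2 (hatz X z - w)) '' M) ≤ nrm2 (hatz X z - zs) :=
    csInf_le hbdd ⟨zs, hzsM, rfl⟩
  have hInf0 : 0 ≤ sInf ((fun w => nrm2 (hatz X z - w)) '' M) := by
    refine le_csInf himg_ne ?_
    rintro _ ⟨w, _, rfl⟩
    exact Real.sqrt_nonneg _
  have hsqInf : sInf ((fun w => nrm2 (hatz X z - w)) '' M) ^ 2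
      ≤ nrm2 (hatz X z - zs) ^ 2 := pow_le_pow_left₀ hInf0 hInf_le 2
  exact ⟨zs, h1, h2, h3, h4, part5, (EReal.coe_le_coe_iff.2 hsqInf).trans h4⟩
end
end

section
/- Let f ∈ G(Z). Then for every α > 0 and every u* ∈ X* there exist (x*, x**) ∈ X* × X** with f*(x*, x**) = ⟨x*, x**⟩ and v* ∈ X* with ‖v*‖² = ‖x**‖² = ⟨v*, x**⟩ such that u* = x* + α v*. Equivalently, Im( (M_{f*})⁻¹ + α (F_{X*})⁻¹ ) = X* for every α > 0. -/
open NormedSpace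

noncomputable section

lemma sq_cvx {a b c t1 t2 : ℝ} (ha : 0 ≤ a) (hb : 0 ≤ b) (hab : a + b = 1)
    (hc : 0 ≤ c) (h : c ≤ a*t1 + b*t2) :
    c^2 ≤ a*t1^2 + b*t2^2 := by
  nlinarith [sq_nonneg (t1 - t2), mul_nonneg ha hb, sq_nonneg c]

lemma gf_combine {α a b n1 m1 t1 t2 s1 s2 U1 U2 : ℝ} (hα : 0 < α)
    (ha : 0 ≤ a) (hb : 0 ≤ b)
    (c1 : n1^2 ≤ a*t1^2 + b*t2^2) (c2 : m1^2 ≤ a*s1^2 + b*s2^2) :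
    α/2 * n1^2 - (a * U1 + b * U2) + 1/(2*α) * m1^2 ≤
      a * (α/2 * t1^2 - U1 + 1/(2*α) * s1^2) + b * (α/2 * t2^2 - U2 + 1/(2*α) * s2^2) := by
  have k1 : α/2 * n1^2 ≤ α/2 * (a*t1^2 + b*t2^2) :=
    mul_le_mul_of_nonneg_left c1 (by positivity)
  have k2 : 1/(2*α) * m1^2 ≤ 1/(2*α) * (a*s1^2 + b*s2^2) :=
    mul_le_mul_of_nonneg_left c2 (by positivity)
  nlinarith [k1, k2]

lemma near_sup {E : Type*} [NormedAddCommGroup E] [NormedSpace ℝ E]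
    (T : E →L[ℝ] ℝ) {β ε : ℝ} (hβ : 0 < β) (hε : 0 < ε) :
    ∃ x : E, ‖T‖^2/(2*β) - ε ≤ T x - β/2 * ‖x‖^2 := by
  rcases (norm_nonneg T).eq_or_lt with h0 | h0
  · refine ⟨0, ?_⟩
    simp [← h0]
    positivity
  · set N := ‖T‖ with hN
    set δ := min (β*ε/N) (N/2) with hδdef
    have hδpos : 0 < δ := lt_min (by positivity) (by positivity)
    have hδ1 : δ ≤ β*ε/N := min_le_left _ _
    have hδ2 : δ ≤ N/2 := min_le_right _ _
    have hr : N - δ < ‖T‖ := by simp only [← hN]; linarith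
    obtain ⟨x₀, hx₀, hTx₀⟩ := T.exists_lt_apply_of_lt_opNorm hr
    have habs : ‖T x₀‖ = |T x₀| := Real.norm_eq_abs _
    set x₁ := if 0 ≤ T x₀ then x₀ else -x₀ with hx₁def
    have hTx₁ : N - δ < T x₁ := by
      by_cases h : 0 ≤ T x₀
      · simpa [hx₁def, h, habs, abs_of_nonneg h] using hTx₀
      · push_neg at h
        simp only [hx₁def, if_neg (not_le.mpr h), map_neg]
        rw [habs, abs_of_neg h] at hTx₀
        linarith
    have hx₁n : ‖x₁‖ < 1 := by
      by_cases h : 0 ≤ T x₀ <;> simp [hx₁def, h, hx₀]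
    set c := N/β with hc
    have hcpos : 0 < c := by positivity
    refine ⟨c • x₁, ?_⟩
    have hTc : T (c • x₁) = c * T x₁ := by simp
    have hnc : ‖c • x₁‖ ≤ c := by
      rw [norm_smul, Real.norm_eq_abs, abs_of_pos hcpos]
      nlinarith
    have hsq : β/2 * ‖c • x₁‖^2 ≤ β/2 * c^2 := by
      have := pow_le_pow_left₀ (norm_nonneg _) hnc 2
      nlinarith
    have hNδ : N * δ ≤ β * ε := by
      have := (le_div_iff₀ h0).mp hδ1
      linarith
    have key : N^2/(2*β) - ε ≤ c*(N-δ) - β/2*c^2 := by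
      have h1 : c*(N-δ) - β/2*c^2 = N^2/(2*β) - N*δ/β := by
        rw [hc]; field_simp; ring
      have h2 : N*δ/β ≤ ε := by
        rw [div_le_iff₀ hβ]; linarith
      linarith
    have hlast : c*(N-δ) ≤ c * T x₁ := by nlinarith
    rw [hTc]
    calc N^2/(2*β) - ε ≤ c*(N-δ) - β/2*c^2 := key
      _ ≤ c * T x₁ - β/2 * ‖c • x₁‖^2 := by linarith

set_option maxHeartbeats 2000000 in
/-- for `f ∈ G(Z)`, every `α > 0` and every `u* ∈ X*` there are
`(x*, x**) ∈ M_{f*}` and `v* ∈ F_{X*}⁻¹(x**)` with `u* = x* + α v*`; that is,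
`Im((M_{f*})⁻¹ + α (F_{X*})⁻¹) = X*`. -/
theorem stmt3 {X : Type*} [NormedAddCommGroup X] [NormedSpace ℝ X] [CompleteSpace X]
    (f : X × StrongDual ℝ X → EReal)
    (hne_bot : ∀ z, f z ≠ ⊥) (hproper : ∃ z, f z ≠ ⊤)
    (hconv : Convex ℝ {p : (X × StrongDual ℝ X) × ℝ | f p.1 ≤ (p.2 : EReal)})
    (hge : ∀ z, ((coup X z : ℝ) : EReal) ≤ f z)
    (hgeS : ∀ p, ((coupS X p : ℝ) : EReal) ≤ conjF X f p)
    (α : ℝ) (hα : 0 < α) (u : StrongDual ℝ X) :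
    ∃ (xs : StrongDual ℝ X) (xss : StrongDual ℝ (StrongDual ℝ X)) (vs : StrongDual ℝ X),
      conjF X f (xs, xss) = ((coupS X (xs, xss) : ℝ) : EReal) ∧
      ‖vs‖ ^ 2 = ‖xss‖ ^ 2 ∧ ‖vs‖ ^ 2 = xss vs ∧
      u = xs + α • vs := by
  classical
  set Gf : X × StrongDual ℝ X → ℝ :=
    fun z => α/2 * ‖z.1‖^2 - u z.1 + 1/(2*α) * ‖z.2 - u‖^2 with hGf
  set A : Set ((X × StrongDual ℝ X) × ℝ) := {p | f p.1 ≤ (p.2 : EReal)} with hAdef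
  set B : Set ((X × StrongDual ℝ X) × ℝ) := {q | q.2 + Gf q.1 < 0} with hBdef
  -- convexity of Gf
  have hGconv : ∀ (z z' : X × StrongDual ℝ X) (a b : ℝ), 0 ≤ a → 0 ≤ b → a + b = 1 →
      Gf (a • z + b • z') ≤ a * Gf z + b * Gf z' := by
    intro z z' a b ha hb hab
    have hn1 : ‖(a • z + b • z').1‖ ≤ a * ‖z.1‖ + b * ‖z'.1‖ := by
      show ‖a • z.1 + b • z'.1‖ ≤ _
      calc ‖a • z.1 + b • z'.1‖ ≤ ‖a • z.1‖ + ‖b • z'.1‖ := norm_add_le _ _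
        _ = a * ‖z.1‖ + b * ‖z'.1‖ := by
            rw [norm_smul, norm_smul, Real.norm_eq_abs, Real.norm_eq_abs,
              abs_of_nonneg ha, abs_of_nonneg hb]
    have hn2 : ‖(a • z + b • z').2 - u‖ ≤ a * ‖z.2 - u‖ + b * ‖z'.2 - u‖ := by
      have hrw : (a • z + b • z').2 - u = a • (z.2 - u) + b • (z'.2 - u) := by
        show a • z.2 + b • z'.2 - u = _
        have hb' : b = 1 - a := by linarith
        subst hb'
        module
      rw [hrw]
      calc ‖a • (z.2 - u) + b • (z'.2 - u)‖
          ≤ ‖a • (z.2 - u)‖ + ‖b • (z'.2 - u)‖ := norm_add_le _ _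
        _ = a * ‖z.2 - u‖ + b * ‖z'.2 - u‖ := by
            rw [norm_smul, norm_smul, Real.norm_eq_abs, Real.norm_eq_abs,
              abs_of_nonneg ha, abs_of_nonneg hb]
    have h1 : ‖(a • z + b • z').1‖^2 ≤ a * ‖z.1‖^2 + b * ‖z'.1‖^2 :=
      sq_cvx ha hb hab (norm_nonneg _) hn1
    have h2 : ‖(a • z + b • z').2 - u‖^2 ≤ a * ‖z.2 - u‖^2 + b * ‖z'.2 - u‖^2 :=
      sq_cvx ha hb hab (norm_nonneg _) hn2
    have hu : u (a • z + b • z').1 = a * u z.1 + b * u z'.1 := by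
      show u (a • z.1 + b • z'.1) = _
      simp
    simp only [hGf]
    rw [hu]
    exact gf_combine hα ha hb h1 h2
  have hBconv : Convex ℝ B := by
    intro q hq q' hq' a b ha hb hab
    simp only [hBdef, Set.mem_setOf_eq] at hq hq' ⊢
    have hG := hGconv q.1 q'.1 a b ha hb hab
    have h1 : (a • q + b • q').1 = a • q.1 + b • q'.1 := rfl
    have h2 : (a • q + b • q').2 = a * q.2 + b * q'.2 := rfl
    rw [h1, h2] at *
    rcases eq_or_lt_of_le ha with ha0 | ha0
    · have hb1 : b = 1 := by linarith
      subst hb1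
      rw [← ha0] at hG ⊢
      simp only [zero_smul, zero_add, one_smul, zero_mul, one_mul] at hG ⊢
      linarith
    · have e1 : a * (q.2 + Gf q.1) < 0 := mul_neg_of_pos_of_neg ha0 hq
      have e2 : b * (q'.2 + Gf q'.1) ≤ 0 := mul_nonpos_of_nonneg_of_nonpos hb hq'.le
      nlinarith [e1, e2, hG]
  have hBopen : IsOpen B := by
    have hcont : Continuous fun q : (X × StrongDual ℝ X) × ℝ => q.2 + Gf q.1 := by
      simp only [hGf]
      fun_prop
    have : B = {q : (X × StrongDual ℝ X) × ℝ | q.2 + Gf q.1 < 0} := rfl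
    rw [this]
    exact isOpen_lt hcont continuous_const
  have hdisj : Disjoint B A := by
    rw [Set.disjoint_left]
    rintro ⟨z, r⟩ hqB hqA
    simp only [hBdef, Set.mem_setOf_eq] at hqB
    simp only [hAdef, Set.mem_setOf_eq] at hqA
    have h1 : ((coup X z : ℝ) : EReal) ≤ (r : EReal) := le_trans (hge z) hqA
    have h2 : z.2 z.1 ≤ r := by
      have := EReal.coe_le_coe_iff.mp h1
      simpa [coup] using this
    have h3 : (z.2 - u) z.1 = z.2 z.1 - u z.1 := by simp
    have h4 : -(‖z.2 - u‖ * ‖z.1‖) ≤ (z.2 - u) z.1 := by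
      have hop := (z.2 - u).le_opNorm z.1
      rw [Real.norm_eq_abs] at hop
      linarith [neg_abs_le ((z.2 - u) z.1)]
    have h5 : 0 ≤ z.2 z.1 + Gf z := by
      simp only [hGf]
      rw [h3] at h4
      have h2α : (0:ℝ) < 2*α := by linarith
      have h6 : 2*α*(‖z.2 - u‖ * ‖z.1‖) ≤
          2*α*(α/2 * ‖z.1‖^2 + 1/(2*α) * ‖z.2 - u‖^2) := by
        have hexp : 2*α*(α/2 * ‖z.1‖^2 + 1/(2*α) * ‖z.2 - u‖^2)
            = α^2*‖z.1‖^2 + ‖z.2 - u‖^2 := by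
          field_simp
        rw [hexp]
        nlinarith [sq_nonneg (α * ‖z.1‖ - ‖z.2 - u‖)]
      have h7 : ‖z.2 - u‖ * ‖z.1‖ ≤ α/2 * ‖z.1‖^2 + 1/(2*α) * ‖z.2 - u‖^2 :=
        le_of_mul_le_mul_left h6 h2α
      linarith
    linarith
  obtain ⟨φ, γ, hBlt, hAge⟩ := geometric_hahn_banach_open hBconv hBopen hconv hdisj
  set σ := φ (((0 : X), (0 : StrongDual ℝ X)), (1:ℝ)) with hσdef
  have hdec : ∀ (z : X × StrongDual ℝ X) (r : ℝ), φ (z, r) = φ (z, 0) + r * σ := by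
    intro z r
    have hzr : ((z, r) : (X × StrongDual ℝ X) × ℝ)
        = (z, 0) + r • (((0:X), (0:StrongDual ℝ X)), (1:ℝ)) := by
      simp [Prod.ext_iff]
    rw [hzr, map_add, map_smul, smul_eq_mul]
  have hφ00 : φ (((0:X), (0:StrongDual ℝ X)), (0:ℝ)) = 0 := by
    have : ((((0:X), (0:StrongDual ℝ X)), (0:ℝ)) : (X × StrongDual ℝ X) × ℝ) = 0 := rfl
    rw [this, map_zero]
  have hσ0 : 0 ≤ σ := by
    by_contra h
    push_neg at h
    set r := min (-Gf ((0:X), (0:StrongDual ℝ X)) - 1) (γ/σ) with hrdef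
    have hmem : ((((0:X), (0:StrongDual ℝ X)), r) : (X × StrongDual ℝ X) × ℝ) ∈ B := by
      simp only [hBdef, Set.mem_setOf_eq]
      have := min_le_left (-Gf ((0:X), (0:StrongDual ℝ X)) - 1) (γ/σ)
      simp only [← hrdef] at this
      linarith
    have h1 := hBlt _ hmem
    rw [hdec, hφ00, zero_add] at h1
    have h3 : r ≤ γ/σ := min_le_right _ _
    have h4 : γ ≤ r * σ := by
      have := mul_le_mul_of_nonpos_right h3 h.le
      rwa [div_mul_cancel₀ γ (ne_of_lt h)] at this
    linarith
  have hσne : σ ≠ 0 := by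
    intro h
    have hBz : ∀ z : X × StrongDual ℝ X, φ (z, 0) < γ := by
      intro z
      have hmem : ((z, -Gf z - 1) : (X × StrongDual ℝ X) × ℝ) ∈ B := by
        simp only [hBdef, Set.mem_setOf_eq]; linarith
      have := hBlt _ hmem
      rwa [hdec, h, mul_zero, add_zero] at this
    have h0γ : 0 < γ := by
      have := hBz ((0:X), (0:StrongDual ℝ X))
      rwa [hφ00] at this
    have hle : ∀ z : X × StrongDual ℝ X, φ (z, 0) ≤ 0 := by
      intro z
      by_contra hpos
      push_neg at hpos
      set t := (γ + 1) / φ (z, 0) with htdef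
      have htpos : 0 < t := by positivity
      have hsm : φ (t • z, 0) = t * φ (z, 0) := by
        have : ((t • z, (0:ℝ)) : (X × StrongDual ℝ X) × ℝ) = t • (z, (0:ℝ)) := by
          simp [Prod.ext_iff]
        rw [this, map_smul, smul_eq_mul]
      have h2 := hBz (t • z)
      rw [hsm, htdef, div_mul_cancel₀ _ (ne_of_gt hpos)] at h2
      linarith
    obtain ⟨z₀, hz₀⟩ := hproper
    obtain ⟨t₀, ht₀⟩ : ∃ t₀ : ℝ, f z₀ = (t₀ : EReal) :=
      ⟨(f z₀).toReal, (EReal.coe_toReal hz₀ (hne_bot z₀)).symm⟩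
    have hmemA : ((z₀, t₀) : (X × StrongDual ℝ X) × ℝ) ∈ A := by
      simp only [hAdef, Set.mem_setOf_eq]
      exact le_of_eq ht₀
    have := hAge _ hmemA
    rw [hdec, h, mul_zero, add_zero] at this
    linarith [hle z₀]
  have hσpos : 0 < σ := lt_of_le_of_ne hσ0 (Ne.symm hσne)
  set φ₁ : (X × StrongDual ℝ X) →L[ℝ] ℝ :=
    φ.comp (ContinuousLinearMap.inl ℝ (X × StrongDual ℝ X) ℝ) with hφ₁
  set xs : StrongDual ℝ X :=
    (-σ⁻¹) • (φ₁.comp (ContinuousLinearMap.inl ℝ X (StrongDual ℝ X))) with hxsdef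
  set xss : StrongDual ℝ (StrongDual ℝ X) :=
    (-σ⁻¹) • (φ₁.comp (ContinuousLinearMap.inr ℝ X (StrongDual ℝ X))) with hxssdef
  have hkey : ∀ (z : X × StrongDual ℝ X) (r : ℝ),
      φ (z, r) = σ * (r - xs z.1 - xss z.2) := by
    intro z r
    have hsplit : φ₁ z = φ₁ (z.1, 0) + φ₁ ((0 : X), z.2) := by
      rw [← map_add]
      congr 1
      simp [Prod.ext_iff]
    have e1 : xs z.1 = -σ⁻¹ * φ₁ (z.1, 0) := by
      simp [hxsdef]
    have e2 : xss z.2 = -σ⁻¹ * φ₁ ((0 : X), z.2) := by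
      simp [hxssdef]
    have e0 : φ (z, 0) = φ₁ z := rfl
    rw [hdec, e0, hsplit, e1, e2]
    field_simp
    ring
  set K := γ/σ with hKdef
  have hup : conjF X f (xs, xss) ≤ ((-K : ℝ) : EReal) := by
    rw [conjF]
    apply iSup_le
    intro z
    by_cases hz : f z = ⊤
    · rw [hz, EReal.sub_top]; exact bot_le
    · obtain ⟨t, ht⟩ : ∃ t : ℝ, f z = (t : EReal) :=
        ⟨(f z).toReal, (EReal.coe_toReal hz (hne_bot z)).symm⟩
      have hmemA : ((z, t) : (X × StrongDual ℝ X) × ℝ) ∈ A := by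
        simp only [hAdef, Set.mem_setOf_eq]
        exact le_of_eq ht
      have h1 := hAge _ hmemA
      rw [hkey] at h1
      have h2 : xs z.1 + xss z.2 - t ≤ -K := by
        have h3 : K ≤ t - xs z.1 - xss z.2 := by
          rw [hKdef, div_le_iff₀ hσpos]
          linarith [h1]
        linarith
      rw [ht, ← EReal.coe_sub]
      exact_mod_cast h2
  have hlo : ((coupS X (xs, xss) : ℝ) : EReal) ≤ conjF X f (xs, xss) := hgeS _
  have hcoupS : coupS X (xs, xss) = xss xs := rfl
  have hnetop : conjF X f (xs, xss) ≠ ⊤ := by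
    intro h
    rw [h] at hup
    exact absurd hup (by simp)
  have hnebot : conjF X f (xs, xss) ≠ ⊥ := by
    intro h
    rw [h] at hlo
    exact absurd hlo (by simp)
  obtain ⟨C, hC⟩ : ∃ C : ℝ, conjF X f (xs, xss) = (C : EReal) :=
    ⟨(conjF X f (xs, xss)).toReal, (EReal.coe_toReal hnetop hnebot).symm⟩
  have hupR : C ≤ -K := by
    rw [hC] at hup
    exact_mod_cast hup
  have hloR : xss xs ≤ C := by
    rw [hC, hcoupS] at hlo
    exact_mod_cast hlo
  have hBineq : ∀ z : X × StrongDual ℝ X, -(xs z.1) - xss z.2 - Gf z ≤ K := by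
    intro z
    apply le_of_forall_pos_le_add
    intro ε hε
    have hmem : ((z, -Gf z - ε) : (X × StrongDual ℝ X) × ℝ) ∈ B := by
      simp only [hBdef, Set.mem_setOf_eq]; linarith
    have h1 := hBlt _ hmem
    rw [hkey] at h1
    have h2 : -Gf z - ε - xs z.1 - xss z.2 < K := by
      rw [hKdef, lt_div_iff₀ hσpos]
      linarith [h1]
    linarith
  have hQ : 1/(2*α) * ‖u - xs‖^2 + α/2 * ‖xss‖^2 - xss u ≤ K := by
    apply le_of_forall_pos_le_add
    intro ε hε
    obtain ⟨x, hx⟩ := near_sup (u - xs) hα (half_pos hε)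
    obtain ⟨w, hw⟩ := near_sup (-xss) (inv_pos.mpr hα) (half_pos hε)
    have hb := hBineq (x, u + w)
    simp only [hGf] at hb
    have hsimp : ((x, u + w) : X × StrongDual ℝ X).2 - u = w := by
      show u + w - u = w
      abel
    rw [hsimp] at hb
    have e1 : (u - xs) x = u x - xs x := by simp
    have e2 : (-xss) w = -(xss w) := by simp
    have e3 : xss (u + w) = xss u + xss w := map_add _ _ _
    have e4 : ‖-xss‖ = ‖xss‖ := norm_neg xss
    rw [e4, e2] at hw
    have e5 : ‖xss‖^2/(2*α⁻¹) = α/2 * ‖xss‖^2 := by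
      rw [div_eq_mul_inv, mul_inv_rev, inv_inv]; ring
    have e6 : α⁻¹/2 * ‖w‖^2 = 1/(2*α) * ‖w‖^2 := by
      rw [one_div, mul_inv_rev]; ring
    rw [e5, e6] at hw
    have e7 : ‖u - xs‖^2/(2*α) = 1/(2*α) * ‖u - xs‖^2 := by ring
    rw [e7, e1] at hx
    have hb1 : xs x = xs ((x, u + w) : X × StrongDual ℝ X).1 := rfl
    have hb2 : xss (u + w) = xss ((x, u + w) : X × StrongDual ℝ X).2 := rfl
    have hb3 : u x = u ((x, u + w) : X × StrongDual ℝ X).1 := rfl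
    have hb4 : ‖x‖ = ‖((x, u + w) : X × StrongDual ℝ X).1‖ := rfl
    rw [← hb1, ← hb3, ← hb4, e3] at hb
    linarith
  set t := ‖u - xs‖ with htdef
  set s₂ := ‖xss‖ with hs₂def
  have hd : xss (u - xs) = xss u - xss xs := map_sub _ _ _
  have habs : |xss (u - xs)| ≤ s₂ * t := by
    have := xss.le_opNorm (u - xs)
    rwa [Real.norm_eq_abs] at this
  have hchain : 1/(2*α) * t^2 + α/2 * s₂^2 ≤ xss u - xss xs := by
    linarith
  have hub : xss u - xss xs ≤ s₂ * t := by
    rw [← hd]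
    exact le_trans (le_abs_self _) habs
  have hsq0 : (t - α*s₂)^2 ≤ 0 := by
    have hcomb : 1/(2*α)*t^2 + α/2*s₂^2 ≤ s₂*t := le_trans hchain hub
    have hmul : 2*α*(1/(2*α)*t^2 + α/2*s₂^2) ≤ 2*α*(s₂*t) :=
      mul_le_mul_of_nonneg_left hcomb (by positivity)
    have hexp : 2*α*(1/(2*α)*t^2 + α/2*s₂^2) = t^2 + α^2*s₂^2 := by
      field_simp
    rw [hexp] at hmul
    nlinarith [hmul]
  have hts : t = α * s₂ := by
    have h := le_antisymm hsq0 (sq_nonneg _)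
    have := pow_eq_zero_iff (n := 2) (by norm_num) |>.mp h
    linarith [this]
  have hdval : xss u - xss xs = s₂ * t := by
    apply le_antisymm hub
    have e : 1/(2*α) * t^2 + α/2 * s₂^2 = s₂ * t := by
      rw [hts]; field_simp; ring
    linarith
  have hCval : C = xss xs := by
    apply le_antisymm _ hloR
    have e : 1/(2*α) * t^2 + α/2 * s₂^2 = s₂ * t := by
      rw [hts]; field_simp; ring
    linarith
  refine ⟨xs, xss, α⁻¹ • (u - xs), ?_, ?_, ?_, ?_⟩
  · rw [hC, hcoupS, hCval]
  · have hn : ‖α⁻¹ • (u - xs)‖ = s₂ := by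
      rw [norm_smul, Real.norm_eq_abs, abs_of_pos (inv_pos.mpr hα), ← htdef, hts]
      field_simp
    rw [hn]
  · have hn : ‖α⁻¹ • (u - xs)‖ = s₂ := by
      rw [norm_smul, Real.norm_eq_abs, abs_of_pos (inv_pos.mpr hα), ← htdef, hts]
      field_simp
    rw [hn]
    have : xss (α⁻¹ • (u - xs)) = α⁻¹ * xss (u - xs) := by
      rw [map_smul, smul_eq_mul]
    rw [this, hd, hdval, hts]
    field_simp
  · rw [smul_smul, mul_inv_cancel₀ hα.ne', one_smul, add_sub_cancel]
end
end

section
/- Let f : Z → ℝ ∪ {+∞} be such that inf_{w ∈ Z} ( f_z(w) + h(w) ) = 0 for every z ∈ Z. Then f ≥ c on Z. If moreover f is convex, then f ∈ F(Z) and f*(z*) ≥ c(z*) for every z* of the form z* = ŵ + (v*, v**) with w ∈ Z and (v*, v**) in the graph of −F_{X*} (i.e., ‖v*‖² = ‖v**‖² = −⟨v*, v**⟩). -/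
open NormedSpace

noncomputable section

/-- membership in the class `F(Z)`: proper, convex, `≥ c` on `Z`. -/
def memF (X : Type*) [NormedAddCommGroup X] [NormedSpace ℝ X]
    (f : X × StrongDual ℝ X → EReal) : Prop :=
  (∀ z, f z ≠ ⊥) ∧ (∃ z, f z ≠ ⊤) ∧
    Convex ℝ {p : (X × StrongDual ℝ X) × ℝ | f p.1 ≤ (p.2 : EReal)} ∧
    ∀ z, ((coup X z : ℝ) : EReal) ≤ f z

/-- Key quadratic inequality coming from `‖v*‖ = ‖v**‖`. -/
lemma key_ineq {X : Type*} [NormedAddCommGroup X] [NormedSpace ℝ X]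
    (vs : StrongDual ℝ X) (vss : StrongDual ℝ (StrongDual ℝ X)) (h1 : ‖vs‖ ^ 2 = ‖vss‖ ^ 2)
    (u₁ : X) (u₂ : StrongDual ℝ X) :
    -‖vs‖ ^ 2 ≤ vs u₁ + vss u₂ + (‖u₁‖ ^ 2 / 2 + ‖u₂‖ ^ 2 / 2) := by
  have a1 : -(‖vs‖ * ‖u₁‖) ≤ vs u₁ := by
    have := vs.le_opNorm u₁
    have h := neg_abs_le (vs u₁)
    rw [Real.norm_eq_abs] at this
    linarith
  have a2 : -(‖vss‖ * ‖u₂‖) ≤ vss u₂ := by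
    have := vss.le_opNorm u₂
    have h := neg_abs_le (vss u₂)
    rw [Real.norm_eq_abs] at this
    linarith
  nlinarith [sq_nonneg (‖u₁‖ - ‖vs‖), sq_nonneg (‖u₂‖ - ‖vss‖)]

/-- if `f : Z → ℝ ∪ {+∞}` satisfies `inf_w (f_z(w) + h(w)) = 0` for every
`z ∈ Z`, then `f ≥ c`; if moreover `f` is convex then `f ∈ F(Z)` and `f*(z*) ≥ c(z*)`
for every `z* = ŵ + (v*, v**)` with `w ∈ Z` and `(v*, v**) ∈ gph(-F_{X*})`. -/
theorem stmt4 {X : Type*} [NormedAddCommGroup X] [NormedSpace ℝ X] [CompleteSpace X]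
    (f : X × StrongDual ℝ X → EReal) (hne_bot : ∀ z, f z ≠ ⊥)
    (hinf : ∀ z : X × StrongDual ℝ X,
      (⨅ w : X × StrongDual ℝ X,
        (f (z + w) - ((coup X (z + w) : ℝ) : EReal) + ((coup X w : ℝ) : EReal)
          + ((hfun X w : ℝ) : EReal))) = 0) :
    (∀ z, ((coup X z : ℝ) : EReal) ≤ f z) ∧
    (Convex ℝ {p : (X × StrongDual ℝ X) × ℝ | f p.1 ≤ (p.2 : EReal)} →
      memF X f ∧
      ∀ (w : X × StrongDual ℝ X) (vs : StrongDual ℝ X) (vss : StrongDual ℝ (StrongDual ℝ X)),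
        ‖vs‖ ^ 2 = ‖vss‖ ^ 2 → ‖vs‖ ^ 2 = -(vss vs) →
        ((coupS X (hatz X w + (vs, vss)) : ℝ) : EReal) ≤ conjF X f (hatz X w + (vs, vss))) := by
  -- Part 1 : `f ≥ c`.
  have hge : ∀ z, ((coup X z : ℝ) : EReal) ≤ f z := by
    intro z
    have h0 := (hinf z).symm.trans_le (iInf_le _ (0 : X × StrongDual ℝ X))
    have hc0 : coup X (0 : X × StrongDual ℝ X) = 0 := by simp [coup]
    have hh0 : hfun X (0 : X × StrongDual ℝ X) = 0 := by simp [hfun]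
    rw [add_zero, hc0, hh0] at h0
    simp only [EReal.coe_zero, add_zero] at h0
    have := (EReal.le_sub_iff_add_le (Or.inl (EReal.coe_ne_bot _))
      (Or.inl (EReal.coe_ne_top _))).1 h0
    simpa using this
  -- approximate minimizers, with finiteness of the value
  have approx : ∀ z : X × StrongDual ℝ X, ∀ e : ℝ, 0 < e →
      ∃ u : X × StrongDual ℝ X, ∃ r : ℝ, f (z + u) = (r : EReal) ∧
        r - coup X (z + u) + coup X u + hfun X u < e := by
    intro z e he
    have hlt : (⨅ w : X × StrongDual ℝ X,
        (f (z + w) - ((coup X (z + w) : ℝ) : EReal) + ((coup X w : ℝ) : EReal)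
          + ((hfun X w : ℝ) : EReal))) < (e : EReal) := by
      rw [hinf z]; exact_mod_cast he
    obtain ⟨u, hu⟩ := iInf_lt_iff.1 hlt
    have hnt : f (z + u) ≠ ⊤ := by
      intro htop
      rw [htop, EReal.top_sub_coe] at hu
      simp [EReal.top_add_coe] at hu
    obtain ⟨r, hr⟩ : ∃ r : ℝ, f (z + u) = (r : EReal) :=
      ⟨(f (z + u)).toReal, (EReal.coe_toReal hnt (hne_bot _)).symm⟩
    rw [hr] at hu
    exact ⟨u, r, hr, by exact_mod_cast hu⟩
  refine ⟨hge, fun hconv => ⟨⟨hne_bot, ?_, hconv, hge⟩, ?_⟩⟩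
  · obtain ⟨u, r, hr, -⟩ := approx 0 1 one_pos
    exact ⟨0 + u, by rw [hr]; exact EReal.coe_ne_top r⟩
  · intro w vs vss h1 h2
    set p : StrongDual ℝ X × StrongDual ℝ (StrongDual ℝ X) := hatz X w + (vs, vss) with hp
    have hp1 : p.1 = w.2 + vs := rfl
    have hp2 : p.2 = inclusionInDoubleDual ℝ X w.1 + vss := rfl
    have e1 : coupS X p = w.2 w.1 + vs w.1 + vss w.2 + vss vs := by
      simp only [coupS, hp1, hp2, ContinuousLinearMap.add_apply, map_add, dual_def]
      ring
    refine le_of_forall_lt_imp_le_of_dense ?_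
    intro c hc
    induction c with
    | bot => exact bot_le
    | top => exact absurd hc not_top_lt
    | coe t =>
      have ht : t < coupS X p := by exact_mod_cast hc
      obtain ⟨u, r, hr, hu⟩ := approx w (coupS X p - t) (by linarith)
      have key := key_ineq vs vss h1 u.1 u.2
      have e2 : p.1 (w + u).1 + p.2 (w + u).2 =
          (w.2 w.1 + w.2 u.1 + vs w.1 + vs u.1)
            + (w.2 w.1 + u.2 w.1 + vss w.2 + vss u.2) := by
        simp only [hp1, hp2, Prod.fst_add, Prod.snd_add, ContinuousLinearMap.add_apply,
          map_add, dual_def]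
        ring
      have e3 : coup X (w + u) = w.2 w.1 + w.2 u.1 + u.2 w.1 + u.2 u.1 := by
        simp only [coup, Prod.fst_add, Prod.snd_add, ContinuousLinearMap.add_apply, map_add]
        ring
      have e4 : coup X u = u.2 u.1 := rfl
      have e5 : hfun X u = ‖u.1‖ ^ 2 / 2 + ‖u.2‖ ^ 2 / 2 := rfl
      calc (t : EReal) ≤ ((p.1 (w + u).1 + p.2 (w + u).2 : ℝ) : EReal) - f (w + u) := by
            rw [hr, ← EReal.coe_sub]
            apply EReal.coe_le_coe_iff.2
            rw [e3, e4, e5] at hu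
            rw [e2]
            linarith
        _ ≤ conjF X f p :=
            le_iSup (fun z : X × StrongDual ℝ X => ((p.1 z.1 + p.2 z.2 : ℝ) : EReal) - f z) (w + u)
end
end

section
/- Let f : Z → ℝ ∪ {+∞} be proper, convex and norm lower semicontinuous, and assume inf_{w ∈ Z} ( f_z(w) + h(w) ) = 0 for every z ∈ Z. Then M_f is monotone and nonempty, and d( (x,x*), M_f ) ≤ 2 √( f(x,x*) − ⟨x,x*⟩ ) for every (x,x*) ∈ X × X*, where d is the distance for the norm ‖(x,x*)‖ := (‖x‖² + ‖x*‖²)^{1/2} (the inequality is trivially true when f(x,x*) = +∞). -/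
open NormedSpace

noncomputable section

/-- `M_f := {z | f z = c z}`. -/
def Mset (X : Type*) [NormedAddCommGroup X] [NormedSpace ℝ X]
    (f : X × StrongDual ℝ X → EReal) : Set (X × StrongDual ℝ X) :=
  {z | f z = ((coup X z : ℝ) : EReal)}

-- basic real lemmas
lemma cs2 (a b cc d : ℝ) : a*cc + b*d ≤ Real.sqrt (a^2+b^2) * Real.sqrt (cc^2+d^2) := by
  have h1 : Real.sqrt (a^2+b^2) * Real.sqrt (cc^2+d^2) = Real.sqrt ((a^2+b^2)*(cc^2+d^2)) :=
    (Real.sqrt_mul (by positivity) _).symm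
  rw [h1]
  rcases le_or_gt (a*cc + b*d) 0 with h | h
  · exact h.trans (Real.sqrt_nonneg _)
  · rw [show (a*cc+b*d) = Real.sqrt ((a*cc+b*d)^2) by rw [Real.sqrt_sq h.le]]
    apply Real.sqrt_le_sqrt; nlinarith [sq_nonneg (a*d - b*cc)]

lemma sqrt_add_sq_le (a b cc d : ℝ) :
    Real.sqrt ((a+cc)^2 + (b+d)^2) ≤ Real.sqrt (a^2+b^2) + Real.sqrt (cc^2+d^2) := by
  have h0 : (0:ℝ) ≤ Real.sqrt (a^2+b^2) + Real.sqrt (cc^2+d^2) := by positivity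
  rw [show Real.sqrt (a^2+b^2) + Real.sqrt (cc^2+d^2)
      = Real.sqrt ((Real.sqrt (a^2+b^2) + Real.sqrt (cc^2+d^2))^2) by rw [Real.sqrt_sq h0]]
  apply Real.sqrt_le_sqrt
  have e1 : Real.sqrt (a^2+b^2)^2 = a^2+b^2 := Real.sq_sqrt (by positivity)
  have e2 : Real.sqrt (cc^2+d^2)^2 = cc^2+d^2 := Real.sq_sqrt (by positivity)
  have := cs2 a b cc d
  nlinarith [this]

lemma nrm2_nonneg {A B : Type*} [NormedAddCommGroup A] [NormedAddCommGroup B] (p : A × B) :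
    0 ≤ nrm2 p := Real.sqrt_nonneg _

lemma nrm2_mono {A B : Type*} [NormedAddCommGroup A] [NormedAddCommGroup B] (p : A × B)
    {a b : ℝ} (h1 : ‖p.1‖ ≤ a) (h2 : ‖p.2‖ ≤ b) : nrm2 p ≤ Real.sqrt (a^2 + b^2) := by
  apply Real.sqrt_le_sqrt
  have := norm_nonneg p.1; have := norm_nonneg p.2
  nlinarith

lemma nrm2_triangle {A B : Type*} [NormedAddCommGroup A] [NormedAddCommGroup B] (p q : A × B) :
    nrm2 (p + q) ≤ nrm2 p + nrm2 q := by
  have h := nrm2_mono (p + q) (norm_add_le p.1 q.1) (norm_add_le p.2 q.2)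
  exact h.trans (sqrt_add_sq_le _ _ _ _)

lemma norm_le_nrm2 {A B : Type*} [NormedAddCommGroup A] [NormedAddCommGroup B] (p : A × B) :
    ‖p‖ ≤ nrm2 p := by
  rw [Prod.norm_def]
  apply max_le
  · rw [show ‖p.1‖ = Real.sqrt (‖p.1‖^2) by rw [Real.sqrt_sq (norm_nonneg _)]]
    apply Real.sqrt_le_sqrt; nlinarith [sq_nonneg ‖p.2‖]
  · rw [show ‖p.2‖ = Real.sqrt (‖p.2‖^2) by rw [Real.sqrt_sq (norm_nonneg _)]]
    apply Real.sqrt_le_sqrt; nlinarith [sq_nonneg ‖p.1‖]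

-- EReal helpers
lemma ereal_ineq (x : EReal) (hb : x ≠ ⊥) (a b : ℝ) (h : 0 ≤ x - (a:EReal) + (b:EReal)) :
    ((a - b : ℝ) : EReal) ≤ x := by
  induction x with
  | bot => exact absurd rfl hb
  | coe r =>
    rw [show ((r:EReal) - (a:EReal) + (b:EReal)) = ((r - a + b : ℝ) : EReal) by
      rw [← EReal.coe_sub, ← EReal.coe_add]] at h
    rw [EReal.coe_le_coe_iff]
    have := EReal.coe_nonneg.mp h
    linarith
  | top => exact le_top

-- duality sublemma
lemma dual_sq {E : Type*} [NormedAddCommGroup E] [NormedSpace ℝ E]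
    (a : StrongDual ℝ E) {ε : ℝ} (hε : 0 < ε) :
    ∃ x : E, ‖a‖^2/2 - ε ≤ -(a x) - ‖x‖^2/2 := by
  rcases eq_or_lt_of_le (norm_nonneg a) with h0 | h0
  · exact ⟨0, by simp [← h0]; positivity⟩
  · set δ := min (ε / ‖a‖) ‖a‖ / 2 with hδdef
    have hδpos : 0 < δ := by positivity
    have hδ1 : δ ≤ ε / ‖a‖ := by
      rw [hδdef]; nlinarith [min_le_left (ε / ‖a‖) ‖a‖]
    have hr : ‖a‖ - δ < ‖a‖ := by linarith
    obtain ⟨x₀, hx₀, hax₀⟩ := a.exists_lt_apply_of_lt_opNorm hr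
    have habs : ‖a‖ - δ < |a x₀| := by rwa [← Real.norm_eq_abs]
    rcases le_or_gt 0 (a x₀) with hsgn | hsgn
    · refine ⟨(-‖a‖) • x₀, ?_⟩
      have h1 : a ((-‖a‖) • x₀) = (-‖a‖) * a x₀ := by rw [map_smul]; rfl
      have h2 : ‖(-‖a‖) • x₀‖ ≤ ‖a‖ := by
        rw [norm_smul, Real.norm_eq_abs, abs_neg, abs_of_nonneg (norm_nonneg a)]
        nlinarith [norm_nonneg a]
      have h3 : |a x₀| = a x₀ := abs_of_nonneg hsgn
      have hd : δ * ‖a‖ ≤ ε := by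
        rw [le_div_iff₀ h0] at hδ1; nlinarith
      nlinarith [h2, norm_nonneg ((-‖a‖) • x₀), sq_nonneg (‖(-‖a‖) • x₀‖ - ‖a‖)]
    · refine ⟨‖a‖ • x₀, ?_⟩
      have h1 : a (‖a‖ • x₀) = ‖a‖ * a x₀ := by rw [map_smul]; rfl
      have h2 : ‖‖a‖ • x₀‖ ≤ ‖a‖ := by
        rw [norm_smul, Real.norm_eq_abs, abs_of_nonneg (norm_nonneg a)]
        nlinarith [norm_nonneg a]
      have h3 : |a x₀| = -(a x₀) := abs_of_neg hsgn
      have hd : δ * ‖a‖ ≤ ε := by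
        rw [le_div_iff₀ h0] at hδ1; nlinarith
      nlinarith [h2, norm_nonneg (‖a‖ • x₀), sq_nonneg (‖‖a‖ • x₀‖ - ‖a‖)]

section sec
variable {X : Type*} [NormedAddCommGroup X] [NormedSpace ℝ X]

def lin (z w : X × StrongDual ℝ X) : ℝ := z.2 w.1 + w.2 z.1

lemma lin_smul_add (z : X × StrongDual ℝ X) (a b : ℝ) (p q : X × StrongDual ℝ X) :
    lin z (a • p + b • q) = a * lin z p + b * lin z q := by
  simp only [lin, Prod.fst_add, Prod.snd_add, Prod.smul_fst, Prod.smul_snd, map_add, map_smul,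
    ContinuousLinearMap.add_apply, ContinuousLinearMap.smul_apply, smul_eq_mul]
  ring

lemma coup_add' (z w : X × StrongDual ℝ X) :
    coup X (z + w) = coup X z + lin z w + coup X w := by
  simp [coup, lin, Prod.fst_add, Prod.snd_add, map_add, ContinuousLinearMap.add_apply]; ring

lemma hfun_convex (w1 w2 : X × StrongDual ℝ X) {a b : ℝ} (ha : 0 ≤ a) (hb : 0 ≤ b) (hab : a + b = 1) :
    hfun X (a • w1 + b • w2) ≤ a * hfun X w1 + b * hfun X w2 := by
  have k1 : ‖(a • w1 + b • w2).1‖ ≤ a * ‖w1.1‖ + b * ‖w2.1‖ := by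
    simp only [Prod.fst_add, Prod.smul_fst]
    refine (norm_add_le _ _).trans ?_
    simp only [norm_smul, Real.norm_eq_abs, abs_of_nonneg ha, abs_of_nonneg hb]
    exact le_refl _
  have k2 : ‖(a • w1 + b • w2).2‖ ≤ a * ‖w1.2‖ + b * ‖w2.2‖ := by
    simp only [Prod.snd_add, Prod.smul_snd]
    refine (norm_add_le _ _).trans ?_
    simp only [norm_smul, Real.norm_eq_abs, abs_of_nonneg ha, abs_of_nonneg hb]
    exact le_refl _
  have s1 : ‖(a • w1 + b • w2).1‖^2 ≤ (a * ‖w1.1‖ + b * ‖w2.1‖)^2 := by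
    nlinarith [norm_nonneg (a • w1 + b • w2).1]
  have s2 : ‖(a • w1 + b • w2).2‖^2 ≤ (a * ‖w1.2‖ + b * ‖w2.2‖)^2 := by
    nlinarith [norm_nonneg (a • w1 + b • w2).2]
  unfold hfun
  nlinarith [sq_nonneg (‖w1.1‖ - ‖w2.1‖), sq_nonneg (‖w1.2‖ - ‖w2.2‖), mul_nonneg ha hb]

lemma hfun_cont : Continuous (hfun X) := by
  apply Continuous.add
  · exact ((continuous_norm.comp continuous_fst).pow 2).div_const 2
  · exact ((continuous_norm.comp continuous_snd).pow 2).div_const 2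

end sec

section part2
variable {X : Type*} [NormedAddCommGroup X] [NormedSpace ℝ X]

lemma q_nonneg (w : X × StrongDual ℝ X) : 0 ≤ coup X w + hfun X w := by
  have h1 : ‖w.2 w.1‖ ≤ ‖w.2‖ * ‖w.1‖ := w.2.le_opNorm w.1
  rw [Real.norm_eq_abs, abs_le] at h1
  unfold coup hfun
  nlinarith [h1.1, sq_nonneg (‖w.1‖ - ‖w.2‖)]

variable (f : X × StrongDual ℝ X → EReal)
  (hne_bot : ∀ z, f z ≠ ⊥)
  (hinf : ∀ z : X × StrongDual ℝ X,
      (⨅ w : X × StrongDual ℝ X,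
        (f (z + w) - ((coup X (z + w) : ℝ) : EReal) + ((coup X w : ℝ) : EReal)
          + ((hfun X w : ℝ) : EReal))) = 0)

include hne_bot hinf in
lemma fgec (z : X × StrongDual ℝ X) : ((coup X z : ℝ) : EReal) ≤ f z := by
  have h0 : (0 : EReal) ≤ f (z + 0) - ((coup X (z + 0) : ℝ) : EReal) + ((coup X (0 : X × StrongDual ℝ X) : ℝ) : EReal)
      + ((hfun X (0 : X × StrongDual ℝ X) : ℝ) : EReal) := by
    rw [← hinf z]; exact iInf_le _ 0
  have hc0 : coup X (0 : X × StrongDual ℝ X) = 0 := by simp [coup]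
  have hh0 : hfun X (0 : X × StrongDual ℝ X) = 0 := by simp [hfun]
  rw [add_zero] at h0
  rw [hc0, hh0] at h0
  simp only [EReal.coe_zero, add_zero] at h0
  have := ereal_ineq (f z) (hne_bot z) (coup X z) 0 (by simpa using h0)
  simpa using this

include hne_bot hinf in
lemma plemma (z : X × StrongDual ℝ X) {δ : ℝ} (hδ : 0 < δ) :
    ∃ w : X × StrongDual ℝ X, f (z + w) ≤ ((coup X (z + w) + δ : ℝ) : EReal) ∧
      coup X w + hfun X w ≤ δ := by
  have hlt : (⨅ w : X × StrongDual ℝ X,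
        (f (z + w) - ((coup X (z + w) : ℝ) : EReal) + ((coup X w : ℝ) : EReal)
          + ((hfun X w : ℝ) : EReal))) < ((δ : ℝ) : EReal) := by
    rw [hinf z]; exact_mod_cast EReal.coe_lt_coe_iff.mpr hδ
  rw [iInf_lt_iff] at hlt
  obtain ⟨w, hw⟩ := hlt
  refine ⟨w, ?_⟩
  have hnt : f (z + w) ≠ ⊤ := by
    intro htop
    rw [htop] at hw
    simp only [EReal.top_sub_coe, EReal.top_add_coe] at hw
    exact (not_top_lt hw)
  have hnb := hne_bot (z + w)
  obtain ⟨v, hv⟩ : ∃ v : ℝ, f (z + w) = (v : EReal) :=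
    ⟨(f (z + w)).toReal, (EReal.coe_toReal hnt hnb).symm⟩
  rw [hv] at hw
  rw [show ((v : EReal) - (coup X (z+w) : ℝ) + (coup X w : ℝ) + (hfun X w : ℝ))
      = ((v - coup X (z+w) + coup X w + hfun X w : ℝ) : EReal) by
    norm_cast] at hw
  rw [EReal.coe_lt_coe_iff] at hw
  have hge : ((coup X (z + w) : ℝ) : EReal) ≤ (v : EReal) := hv ▸ fgec f hne_bot hinf (z + w)
  rw [EReal.coe_le_coe_iff] at hge
  have hq := q_nonneg w
  constructor
  · rw [hv, EReal.coe_le_coe_iff]; linarith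
  · linarith

end part2

section part3
variable {X : Type*} [NormedAddCommGroup X] [NormedSpace ℝ X]
variable (f : X × StrongDual ℝ X → EReal)
  (hne_bot : ∀ z, f z ≠ ⊥) (hproper : ∃ z, f z ≠ ⊤)
  (hconv : Convex ℝ {p : (X × StrongDual ℝ X) × ℝ | f p.1 ≤ (p.2 : EReal)})
  (hinf : ∀ z : X × StrongDual ℝ X,
      (⨅ w : X × StrongDual ℝ X,
        (f (z + w) - ((coup X (z + w) : ℝ) : EReal) + ((coup X w : ℝ) : EReal)
          + ((hfun X w : ℝ) : EReal))) = 0)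

include hne_bot hproper hconv hinf in
set_option maxHeartbeats 1000000 in
lemma lemD (z : X × StrongDual ℝ X) (hzt : f z ≠ ⊤) :
    ∃ (a₁ : StrongDual ℝ X) (a₂ : StrongDual ℝ (StrongDual ℝ X)) (β : ℝ),
      (∀ w : X × StrongDual ℝ X,
        ((coup X z + lin z w + (a₁ w.1 + a₂ w.2) - β : ℝ) : EReal) ≤ f (z + w)) ∧
      ‖a₁‖^2/2 + ‖a₂‖^2/2 ≤ -β ∧ (((coup X z - β : ℝ)) : EReal) ≤ f z := by
  classical
  -- the two sets to separate
  set S : Set ((X × StrongDual ℝ X) × ℝ) := {p | p.2 < -hfun X p.1} with hSdef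
  set T : Set ((X × StrongDual ℝ X) × ℝ) := {p | f (z + p.1) ≤ ((coup X z + lin z p.1 + p.2 : ℝ) : EReal)} with hTdef
  have hSopen : IsOpen S := by
    apply isOpen_lt continuous_snd
    exact (hfun_cont.comp continuous_fst).neg
  have hSconv : Convex ℝ S := by
    rintro p hp q hq a b ha hb hab
    simp only [hSdef, Set.mem_setOf_eq] at hp hq ⊢
    have := hfun_convex (X := X) p.1 q.1 ha hb hab
    have h2 : (a • p + b • q).2 = a * p.2 + b * q.2 := rfl
    have h1 : (a • p + b • q).1 = a • p.1 + b • q.1 := rfl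
    rw [h1, h2]
    have m1 : a * p.2 ≤ a * (-hfun X p.1) := mul_le_mul_of_nonneg_left hp.le ha
    rcases eq_or_lt_of_le hb with hb0 | hb0
    · have ha1 : a = 1 := by linarith
      have m1' : a * p.2 < a * (-hfun X p.1) := by
        rw [ha1, one_mul, one_mul]; exact hp
      have : b * q.2 ≤ b * (-hfun X q.1) := by rw [← hb0]; simp
      linarith [‹hfun X (a • p.1 + b • q.1) ≤ a * hfun X p.1 + b * hfun X q.1›, m1', this]
    have m2 : b * q.2 < b * (-hfun X q.1) := by
      exact (mul_lt_mul_iff_right₀ hb0).mpr hq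
    linarith [‹hfun X (a • p.1 + b • q.1) ≤ a * hfun X p.1 + b * hfun X q.1›, m1, m2]
  have hTconv : Convex ℝ T := by
    rintro p hp q hq a b ha hb hab
    simp only [hTdef, Set.mem_setOf_eq] at hp hq ⊢
    have kp : ((z + p.1, coup X z + lin z p.1 + p.2) : (X × StrongDual ℝ X) × ℝ) ∈
        {p : (X × StrongDual ℝ X) × ℝ | f p.1 ≤ (p.2 : EReal)} := hp
    have kq : ((z + q.1, coup X z + lin z q.1 + q.2) : (X × StrongDual ℝ X) × ℝ) ∈
        {p : (X × StrongDual ℝ X) × ℝ | f p.1 ≤ (p.2 : EReal)} := hq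
    have := hconv kp kq ha hb hab
    simp only [Set.mem_setOf_eq, Prod.smul_mk, Prod.mk_add_mk, smul_eq_mul] at this
    have e1 : a • (z + p.1) + b • (z + q.1) = z + (a • p + b • q).1 := by
      have h1 : (a • p + b • q).1 = a • p.1 + b • q.1 := rfl
      rw [h1, smul_add, smul_add]
      rw [show a • z + a • p.1 + (b • z + b • q.1) = (a • z + b • z) + (a • p.1 + b • q.1) by abel]
      rw [← add_smul, hab, one_smul]
    have e2 : a * (coup X z + lin z p.1 + p.2) + b * (coup X z + lin z q.1 + q.2)
        = coup X z + lin z (a • p + b • q).1 + (a • p + b • q).2 := by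
      have h1 : (a • p + b • q).1 = a • p.1 + b • q.1 := rfl
      have h2 : (a • p + b • q).2 = a * p.2 + b * q.2 := rfl
      rw [h1, h2, lin_smul_add]
      linear_combination (coup X z) * hab
    rw [e1, e2] at this
    exact this
  have hdisj : Disjoint S T := by
    rw [Set.disjoint_left]
    rintro p hpS hpT
    simp only [hSdef, Set.mem_setOf_eq] at hpS
    simp only [hTdef, Set.mem_setOf_eq] at hpT
    have h0 : (0 : EReal) ≤ f (z + p.1) - ((coup X (z + p.1) : ℝ) : EReal)
        + ((coup X p.1 : ℝ) : EReal) + ((hfun X p.1 : ℝ) : EReal) := by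
      rw [← hinf z]; exact iInf_le _ p.1
    rw [add_assoc, ← EReal.coe_add] at h0
    have hlow : ((coup X (z + p.1) - (coup X p.1 + hfun X p.1) : ℝ) : EReal) ≤ f (z + p.1) :=
      ereal_ineq _ (hne_bot _) _ _ h0
    have hcomb := hlow.trans hpT
    rw [EReal.coe_le_coe_iff, coup_add'] at hcomb
    linarith
  obtain ⟨F, u, hFS, hFT⟩ := geometric_hahn_banach_open hSconv hSopen hTconv hdisj
  set A₀ : (X × StrongDual ℝ X) →L[ℝ] ℝ := F.comp (ContinuousLinearMap.inl ℝ (X × StrongDual ℝ X) ℝ) with hA₀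
  set γ : ℝ := F (0, 1) with hγdef
  have Fsplit : ∀ (w : X × StrongDual ℝ X) (t : ℝ), F (w, t) = A₀ w + t * γ := by
    intro w t
    have e : (w, t) = ((w, 0) : (X × StrongDual ℝ X) × ℝ) + t • ((0,1) : (X × StrongDual ℝ X) × ℝ) := by
      simp [Prod.ext_iff]
    rw [e, map_add, map_smul, smul_eq_mul]
    simp only [hA₀, hγdef, ContinuousLinearMap.comp_apply, ContinuousLinearMap.inl_apply]
  -- membership helpers
  have hSmem : ∀ (w : X × StrongDual ℝ X) (t : ℝ), t < -hfun X w → A₀ w + t * γ < u := by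
    intro w t ht
    have := hFS (w, t) ht
    rwa [Fsplit] at this
  have hTmem : ∀ (w : X × StrongDual ℝ X) (v : ℝ), f (z + w) = (v : EReal) →
      u ≤ A₀ w + (v - coup X z - lin z w) * γ := by
    intro w v hv
    have hm : ((w, v - coup X z - lin z w) : (X × StrongDual ℝ X) × ℝ) ∈ T := by
      simp only [hTdef, Set.mem_setOf_eq, hv]
      rw [EReal.coe_le_coe_iff]; ring_nf; exact le_refl _
    have := hFT _ hm
    rwa [Fsplit] at this
  -- γ > 0
  obtain ⟨z₁, hz₁⟩ := hproper
  have hTne : ∃ (w : X × StrongDual ℝ X) (v : ℝ), f (z + w) = (v : EReal) := by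
    refine ⟨z₁ - z, (f z₁).toReal, ?_⟩
    rw [show z + (z₁ - z) = z₁ by abel]
    exact (EReal.coe_toReal hz₁ (hne_bot z₁)).symm
  obtain ⟨w₁, v₁, hv₁⟩ := hTne
  have hγpos : 0 < γ := by
    rcases lt_trichotomy γ 0 with hneg | hzero | hpos
    · -- γ < 0 : take t very negative in S at w := 0
      exfalso
      set t : ℝ := min (u / γ - 1) (-1) with htdef
      have ht : t < -hfun X (0 : X × StrongDual ℝ X) := by
        have : hfun X (0 : X × StrongDual ℝ X) = 0 := by simp [hfun]
        rw [this, neg_zero]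
        calc t ≤ -1 := min_le_right _ _
        _ < 0 := by norm_num
      have h1 := hSmem 0 t ht
      rw [map_zero, zero_add] at h1
      have h2 : t ≤ u / γ - 1 := min_le_left _ _
      have h3 : u - γ ≤ t * γ := by
        rw [show u - γ = (u / γ - 1) * γ by rw [sub_mul, one_mul, div_mul_cancel₀ u hneg.ne]]
        exact mul_le_mul_of_nonpos_right h2 hneg.le
      linarith
    · -- γ = 0
      exfalso
      have h1 := hTmem w₁ v₁ hv₁
      have h2 := hSmem w₁ (-hfun X w₁ - 1) (by linarith)
      rw [hzero] at h1 h2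
      linarith
    · exact hpos
  -- define the functionals
  set a₁ : StrongDual ℝ X := (-γ⁻¹) • (A₀.comp (ContinuousLinearMap.inl ℝ X (StrongDual ℝ X))) with ha₁
  set a₂ : StrongDual ℝ (StrongDual ℝ X) := (-γ⁻¹) • (A₀.comp (ContinuousLinearMap.inr ℝ X (StrongDual ℝ X))) with ha₂
  set β : ℝ := -(γ⁻¹ * u) with hβ
  have haw : ∀ w : X × StrongDual ℝ X, a₁ w.1 + a₂ w.2 = -(γ⁻¹ * A₀ w) := by
    intro w
    simp only [ha₁, ha₂, ContinuousLinearMap.smul_apply, ContinuousLinearMap.comp_apply,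
      ContinuousLinearMap.inl_apply, ContinuousLinearMap.inr_apply, smul_eq_mul]
    have : (w.1, (0 : StrongDual ℝ X)) + ((0 : X), w.2) = w := by simp [Prod.ext_iff]
    rw [show A₀ w = A₀ (w.1, (0 : StrongDual ℝ X)) + A₀ ((0 : X), w.2) by rw [← map_add, this]]
    ring
  have hγinv : γ⁻¹ * γ = 1 := inv_mul_cancel₀ hγpos.ne'
  -- main lower bound
  have key1 : ∀ w : X × StrongDual ℝ X,
      ((coup X z + lin z w + (a₁ w.1 + a₂ w.2) - β : ℝ) : EReal) ≤ f (z + w) := by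
    intro w
    rcases eq_or_ne (f (z + w)) ⊤ with htop | hnet
    · rw [htop]; exact le_top
    obtain ⟨v, hv⟩ : ∃ v : ℝ, f (z + w) = (v : EReal) :=
      ⟨(f (z+w)).toReal, (EReal.coe_toReal hnet (hne_bot _)).symm⟩
    have h1 := hTmem w v hv
    rw [hv, EReal.coe_le_coe_iff, haw, hβ]
    have h2 : γ⁻¹ * u ≤ γ⁻¹ * (A₀ w + (v - coup X z - lin z w) * γ) :=
      mul_le_mul_of_nonneg_left h1 (inv_nonneg.mpr hγpos.le)
    have h3 : γ⁻¹ * (A₀ w + (v - coup X z - lin z w) * γ)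
        = γ⁻¹ * A₀ w + (v - coup X z - lin z w) := by
      rw [mul_add]
      rw [show γ⁻¹ * ((v - coup X z - lin z w) * γ) = (v - coup X z - lin z w) * (γ⁻¹ * γ) by ring]
      rw [hγinv, mul_one]
    rw [h3] at h2
    linarith
  have key2 : ‖a₁‖^2/2 + ‖a₂‖^2/2 ≤ -β := by
    -- S-side inequality
    have hSineq : ∀ w : X × StrongDual ℝ X, -(a₁ w.1 + a₂ w.2) - hfun X w ≤ -β := by
      intro w
      have step : ∀ ε : ℝ, 0 < ε → A₀ w - hfun X w * γ - ε * γ < u := by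
        intro ε hε
        have := hSmem w (-hfun X w - ε) (by linarith)
        nlinarith [this]
      have hAle : A₀ w - hfun X w * γ ≤ u := by
        apply le_of_forall_pos_le_add
        intro ε' hε'
        have hs := step (ε'/γ) (by positivity)
        have he : (ε'/γ) * γ = ε' := by field_simp
        nlinarith [hs]
      rw [haw, hβ]
      have h2 : γ⁻¹ * (A₀ w - hfun X w * γ) ≤ γ⁻¹ * u :=
        mul_le_mul_of_nonneg_left hAle (inv_nonneg.mpr hγpos.le)
      have h3 : γ⁻¹ * (A₀ w - hfun X w * γ) = γ⁻¹ * A₀ w - hfun X w := by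
        rw [mul_sub, show γ⁻¹ * (hfun X w * γ) = hfun X w * (γ⁻¹ * γ) by ring, hγinv, mul_one]
      rw [h3] at h2
      linarith
    -- now approximate suprema
    have hfin : ∀ ε : ℝ, 0 < ε → ‖a₁‖^2/2 + ‖a₂‖^2/2 - ε ≤ -β := by
      intro ε hε
      obtain ⟨x, hx⟩ := dual_sq a₁ (half_pos hε)
      obtain ⟨y, hy⟩ := dual_sq a₂ (half_pos hε)
      have := hSineq (x, y)
      have hh : hfun X ((x, y) : X × StrongDual ℝ X) = ‖x‖^2/2 + ‖y‖^2/2 := rfl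
      rw [hh] at this
      simp only at this
      linarith
    by_contra hcon
    push_neg at hcon
    have := hfin ((‖a₁‖^2/2 + ‖a₂‖^2/2 - (-β))/2) (by linarith)
    linarith
  have key3 : (((coup X z - β : ℝ)) : EReal) ≤ f z := by
    have h := key1 0
    simp only [lin, Prod.fst_zero, Prod.snd_zero, map_zero, ContinuousLinearMap.zero_apply,
      add_zero, zero_add] at h
    exact h
  exact ⟨a₁, a₂, β, key1, key2, key3⟩


include hne_bot hproper hconv hinf in
set_option maxHeartbeats 1000000 in
lemma stepLemma (z : X × StrongDual ℝ X) (s δ : ℝ) (hδ : 0 < δ)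
    (hz : f z ≤ ((coup X z + s : ℝ) : EReal)) :
    ∃ w : X × StrongDual ℝ X, f (z + w) ≤ ((coup X (z + w) + δ : ℝ) : EReal) ∧
      nrm2 w ≤ Real.sqrt (2*s) + 3 * Real.sqrt δ := by
  have hzt : f z ≠ ⊤ := by
    intro h; rw [h] at hz
    exact (EReal.coe_lt_top _).not_ge hz
  have hs0 : 0 ≤ s := by
    have h1 := (fgec f hne_bot hinf z).trans hz
    rw [EReal.coe_le_coe_iff] at h1; linarith
  obtain ⟨a₁, a₂, β, hK1, hK2, hK3⟩ := lemD f hne_bot hproper hconv hinf z hzt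
  have hβs : -β ≤ s := by
    have h1 := hK3.trans hz
    rw [EReal.coe_le_coe_iff] at h1; linarith
  obtain ⟨w, hw1, hw2⟩ := plemma f hne_bot hinf z hδ
  refine ⟨w, hw1, ?_⟩
  have h4 : coup X z + lin z w + (a₁ w.1 + a₂ w.2) - β ≤ coup X (z + w) + δ := by
    have h := (hK1 w).trans hw1
    rwa [EReal.coe_le_coe_iff] at h
  rw [coup_add'] at h4
  have h5 : hfun X w + (a₁ w.1 + a₂ w.2) + (-β) ≤ 2*δ := by linarith
  have hb1 : -(‖a₁‖ * ‖w.1‖) ≤ a₁ w.1 := by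
    have := a₁.le_opNorm w.1
    rw [Real.norm_eq_abs, abs_le] at this
    linarith [this.1]
  have hb2 : -(‖a₂‖ * ‖w.2‖) ≤ a₂ w.2 := by
    have := a₂.le_opNorm w.2
    rw [Real.norm_eq_abs, abs_le] at this
    linarith [this.1]
  have hfw : hfun X w = ‖w.1‖^2/2 + ‖w.2‖^2/2 := rfl
  have e1 : (‖w.1‖ - ‖a₁‖)^2 ≤ 4*δ := by nlinarith [sq_nonneg (‖w.2‖ - ‖a₂‖)]
  have e2 : (‖w.2‖ - ‖a₂‖)^2 ≤ 4*δ := by nlinarith [sq_nonneg (‖w.1‖ - ‖a₁‖)]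
  have sqrt4 : Real.sqrt (4*δ) = 2*Real.sqrt δ := by
    rw [show (4:ℝ)*δ = 2^2*δ by ring, Real.sqrt_mul (by positivity), Real.sqrt_sq (by norm_num)]
  have f1 : ‖w.1‖ ≤ ‖a₁‖ + 2*Real.sqrt δ := by
    have h := Real.sqrt_le_sqrt e1
    rw [Real.sqrt_sq_eq_abs, sqrt4] at h
    have := abs_le.mp h
    linarith [this.2]
  have f2 : ‖w.2‖ ≤ ‖a₂‖ + 2*Real.sqrt δ := by
    have h := Real.sqrt_le_sqrt e2
    rw [Real.sqrt_sq_eq_abs, sqrt4] at h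
    have := abs_le.mp h
    linarith [this.2]
  have g1 : nrm2 w ≤ Real.sqrt ((‖a₁‖ + 2*Real.sqrt δ)^2 + (‖a₂‖ + 2*Real.sqrt δ)^2) :=
    nrm2_mono w f1 f2
  have g2 := sqrt_add_sq_le ‖a₁‖ ‖a₂‖ (2*Real.sqrt δ) (2*Real.sqrt δ)
  have g3 : Real.sqrt (‖a₁‖^2 + ‖a₂‖^2) ≤ Real.sqrt (2*s) := by
    apply Real.sqrt_le_sqrt; linarith
  have g4 : Real.sqrt ((2*Real.sqrt δ)^2 + (2*Real.sqrt δ)^2) ≤ 3 * Real.sqrt δ := by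
    have hsq : (2*Real.sqrt δ)^2 = 4*δ := by
      rw [mul_pow, Real.sq_sqrt hδ.le]; ring
    rw [hsq]
    rw [show (4:ℝ)*δ + 4*δ = 8*δ by ring]
    have : Real.sqrt (8*δ) ≤ Real.sqrt (9*δ) := Real.sqrt_le_sqrt (by linarith)
    refine this.trans ?_
    rw [show (9:ℝ)*δ = 3^2*δ by ring, Real.sqrt_mul (by positivity), Real.sqrt_sq (by norm_num)]
  linarith [g1, g2, g3, g4]

end part3


lemma nrm2_neg {A B : Type*} [NormedAddCommGroup A] [NormedAddCommGroup B] (p : A × B) :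
    nrm2 (-p) = nrm2 p := by
  unfold nrm2
  rw [Prod.fst_neg, Prod.snd_neg, norm_neg, norm_neg]

lemma coup_cont {X : Type*} [NormedAddCommGroup X] [NormedSpace ℝ X] :
    Continuous (coup X) := by
  have h : Continuous fun p : (StrongDual ℝ X) × X => p.1 p.2 := isBoundedBilinearMap_apply.continuous
  exact h.comp (continuous_snd.prodMk continuous_fst)

lemma nrm2_cont {A B : Type*} [NormedAddCommGroup A] [NormedAddCommGroup B] :
    Continuous (nrm2 : A × B → ℝ) := by
  apply Real.continuous_sqrt.comp
  exact ((continuous_norm.comp continuous_fst).pow 2).add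
    ((continuous_norm.comp continuous_snd).pow 2)

section part4
variable {X : Type*} [NormedAddCommGroup X] [NormedSpace ℝ X]
variable (f : X × StrongDual ℝ X → EReal)
  (hne_bot : ∀ z, f z ≠ ⊥) (hproper : ∃ z, f z ≠ ⊤)
  (hconv : Convex ℝ {p : (X × StrongDual ℝ X) × ℝ | f p.1 ≤ (p.2 : EReal)})
  (hinf : ∀ z : X × StrongDual ℝ X,
      (⨅ w : X × StrongDual ℝ X,
        (f (z + w) - ((coup X (z + w) : ℝ) : EReal) + ((coup X w : ℝ) : EReal)
          + ((hfun X w : ℝ) : EReal))) = 0)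

include hne_bot hproper hconv hinf in
set_option maxHeartbeats 2000000 in
lemma mainLemma [CompleteSpace X] (hlsc : LowerSemicontinuous f)
    (z : X × StrongDual ℝ X) (r κ : ℝ) (hκ : 0 < κ)
    (hz : f z ≤ ((coup X z + r : ℝ) : EReal)) :
    ∃ m ∈ Mset X f, nrm2 (z - m) ≤ Real.sqrt (2*r) + 12 * Real.sqrt κ := by
  classical
  have hr0 : 0 ≤ r := by
    have h1 := (fgec f hne_bot hinf z).trans hz
    rw [EReal.coe_le_coe_iff] at h1; linarith
  set s : ℕ → ℝ := fun n => Nat.rec r (fun k _ => κ / 4^k) n with hs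
  have hs0 : s 0 = r := rfl
  have hssucc : ∀ n, s (n+1) = κ / 4^n := fun n => rfl
  have hkey : ∀ (n : ℕ) (z' : X × StrongDual ℝ X), f z' ≤ ((coup X z' + s n : ℝ) : EReal) →
      ∃ w, f (z' + w) ≤ ((coup X (z' + w) + s (n+1) : ℝ) : EReal) ∧
        nrm2 w ≤ Real.sqrt (2 * s n) + 3 * Real.sqrt (s (n+1)) := by
    intro n z' h
    have hpos : 0 < s (n+1) := by rw [hssucc]; positivity
    exact stepLemma f hne_bot hproper hconv hinf z' (s n) (s (n+1)) hpos h
  let seq : ∀ n : ℕ, {p : X × StrongDual ℝ X // f p ≤ ((coup X p + s n : ℝ) : EReal)} :=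
    fun n => Nat.rec ⟨z, hz⟩
      (fun k ih => ⟨ih.1 + Classical.choose (hkey k ih.1 ih.2),
        (Classical.choose_spec (hkey k ih.1 ih.2)).1⟩) n
  have hseq0 : (seq 0).1 = z := rfl
  have hseq_succ : ∀ n, (seq (n+1)).1
      = (seq n).1 + Classical.choose (hkey n (seq n).1 (seq n).2) := fun n => rfl
  have hstep : ∀ n, nrm2 ((seq (n+1)).1 - (seq n).1)
      ≤ Real.sqrt (2 * s n) + 3 * Real.sqrt (s (n+1)) := by
    intro n
    rw [hseq_succ n, add_sub_cancel_left]
    exact (Classical.choose_spec (hkey n (seq n).1 (seq n).2)).2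
  have sqrt_s : ∀ n : ℕ, Real.sqrt (s (n+1)) = Real.sqrt κ * (1/2:ℝ)^n := by
    intro n
    rw [hssucc]
    have h4 : (4:ℝ)^n = ((2:ℝ)^n)^2 := by
      rw [← pow_mul, show (4:ℝ) = 2^2 by norm_num, ← pow_mul, mul_comm]
    rw [show κ / 4^n = κ * ((1/2:ℝ)^n)^2 by rw [div_pow, one_pow, h4]; field_simp]
    rw [Real.sqrt_mul hκ.le, Real.sqrt_sq (by positivity)]
  have sqrt_2s : ∀ n : ℕ, Real.sqrt (2 * s (n+1)) ≤ 3 * Real.sqrt κ * (1/2:ℝ)^n := by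
    intro n
    have hp : 0 < s (n+1) := by rw [hssucc]; positivity
    have h1 : Real.sqrt (2 * s (n+1)) ≤ Real.sqrt ((3:ℝ)^2 * (s (n+1))) := by
      apply Real.sqrt_le_sqrt; nlinarith
    refine h1.trans ?_
    rw [Real.sqrt_mul (by positivity : (0:ℝ) ≤ (3:ℝ)^2), Real.sqrt_sq (by norm_num : (0:ℝ) ≤ 3),
      sqrt_s n]
    rw [mul_assoc]
  have hstepG : ∀ n, nrm2 ((seq (n+2)).1 - (seq (n+1)).1) ≤ 9 * Real.sqrt κ * (1/2:ℝ)^(n+1) := by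
    intro n
    refine (hstep (n+1)).trans ?_
    have h1 := sqrt_2s n
    have h2 := sqrt_s (n+1)
    rw [h2]
    have h3 : (1/2:ℝ)^(n+1) = (1/2:ℝ)^n * (1/2) := pow_succ _ _
    rw [h3]
    nlinarith [Real.sqrt_nonneg κ, pow_nonneg (by norm_num : (0:ℝ) ≤ 1/2) n]
  have hgeo : ∀ n, dist ((seq n).1) ((seq (n+1)).1)
      ≤ (Real.sqrt (2*r) + 12 * Real.sqrt κ) * (1/2:ℝ)^n := by
    intro n
    rw [dist_eq_norm, norm_sub_rev]
    refine (norm_le_nrm2 _).trans ?_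
    cases n with
    | zero =>
      refine (hstep 0).trans ?_
      rw [hs0]
      have h1 := sqrt_s 0
      simp only [pow_zero, mul_one] at h1
      rw [h1]
      simp only [pow_zero, mul_one]
      nlinarith [Real.sqrt_nonneg κ, Real.sqrt_nonneg (2*r)]
    | succ m =>
      refine (hstepG m).trans ?_
      have h1 : (0:ℝ) ≤ Real.sqrt (2*r) := Real.sqrt_nonneg _
      have hp : (0:ℝ) ≤ (1/2:ℝ)^(m+1) := by positivity
      nlinarith [Real.sqrt_nonneg κ]
  have hcauchy : CauchySeq (fun n => (seq n).1) :=
    cauchySeq_of_le_geometric (1/2) _ (by norm_num) hgeo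
  obtain ⟨m, hm⟩ := cauchySeq_tendsto_of_complete hcauchy
  -- distance bound
  have hind : ∀ n, nrm2 (z - (seq (n+1)).1) ≤ Real.sqrt (2*r) + 3*Real.sqrt κ
      + 9*Real.sqrt κ - 18*Real.sqrt κ * (1/2:ℝ)^(n+1) := by
    intro n
    induction n with
    | zero =>
      have h0 := hstep 0
      have h1 := sqrt_s 0
      simp only [pow_zero, mul_one] at h1
      have h2 : Real.sqrt (2 * s 0) = Real.sqrt (2*r) := by rw [hs0]
      have he : z - (seq (0+1)).1 = -((seq (0+1)).1 - (seq 0).1) := by rw [hseq0]; abel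
      rw [he, nrm2_neg]
      refine h0.trans ?_
      rw [h1, h2]
      norm_num
      linarith [Real.sqrt_nonneg κ]
    | succ k ih =>
      have he : z - (seq (k+2)).1 = (z - (seq (k+1)).1) + -((seq (k+2)).1 - (seq (k+1)).1) := by
        abel
      rw [he]
      refine (nrm2_triangle _ _).trans ?_
      rw [nrm2_neg]
      have h2 := hstepG k
      have h3 : (1/2:ℝ)^(k+2) = (1/2:ℝ)^(k+1) * (1/2) := pow_succ _ _
      rw [h3]
      nlinarith [ih, h2]
  have hall : ∀ n, nrm2 (z - (seq n).1) ≤ Real.sqrt (2*r) + 12*Real.sqrt κ := by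
    intro n
    cases n with
    | zero =>
      have h0 : nrm2 ((0 : X × StrongDual ℝ X)) = 0 := by
        unfold nrm2
        simp
      rw [hseq0, sub_self, h0]
      positivity
    | succ k =>
      refine (hind k).trans ?_
      nlinarith [pow_nonneg (by norm_num : (0:ℝ) ≤ 1/2) (k+1), Real.sqrt_nonneg κ]
  have hlimd : Filter.Tendsto (fun n => nrm2 (z - (seq n).1)) Filter.atTop (nhds (nrm2 (z - m))) := by
    have h1 : Filter.Tendsto (fun n => z - (seq n).1) Filter.atTop (nhds (z - m)) :=
      tendsto_const_nhds.sub hm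
    exact (nrm2_cont.tendsto _).comp h1
  have hbound : nrm2 (z - m) ≤ Real.sqrt (2*r) + 12*Real.sqrt κ :=
    le_of_tendsto hlimd (Filter.Eventually.of_forall hall)
  -- membership
  have hstend : Filter.Tendsto s Filter.atTop (nhds 0) := by
    rw [← Filter.tendsto_add_atTop_iff_nat 1]
    have he : (fun n : ℕ => s (n+1)) = fun n : ℕ => κ * (1/4:ℝ)^n := by
      funext n
      rw [hssucc, one_div, inv_pow, ← div_eq_mul_inv]
    rw [he]
    have := tendsto_pow_atTop_nhds_zero_of_lt_one (by norm_num : (0:ℝ) ≤ 1/4) (by norm_num : (1/4:ℝ) < 1)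
    simpa using this.const_mul κ
  have hfm_le : f m ≤ ((coup X m : ℝ) : EReal) := by
    by_contra hc
    push_neg at hc
    obtain ⟨y, hy1, hy2⟩ : ∃ y : ℝ, coup X m < y ∧ (((y:ℝ)) : EReal) < f m := by
      rcases eq_or_ne (f m) ⊤ with ht | ht
      · exact ⟨coup X m + 1, by linarith, by rw [ht]; exact EReal.coe_lt_top _⟩
      · obtain ⟨v, hv⟩ : ∃ v:ℝ, f m = (v:EReal) :=
          ⟨(f m).toReal, (EReal.coe_toReal ht (hne_bot m)).symm⟩
        rw [hv] at hc ⊢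
        rw [EReal.coe_lt_coe_iff] at hc
        exact ⟨(coup X m + v)/2, by linarith, by rw [EReal.coe_lt_coe_iff]; linarith⟩
    have hev1 : ∀ᶠ n in Filter.atTop, (((y:ℝ)) : EReal) < f ((seq n).1) :=
      hm.eventually (hlsc m _ hy2)
    have htendc : Filter.Tendsto (fun n => coup X ((seq n).1) + s n) Filter.atTop
        (nhds (coup X m + 0)) :=
      Filter.Tendsto.add ((coup_cont.tendsto m).comp hm) hstend
    rw [add_zero] at htendc
    have hev2 : ∀ᶠ n in Filter.atTop, coup X ((seq n).1) + s n < y :=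
      htendc.eventually_lt_const hy1
    obtain ⟨n, h1, h2⟩ := (hev1.and hev2).exists
    have h3 : (((y:ℝ)) : EReal) < ((coup X ((seq n).1) + s n : ℝ) : EReal) :=
      lt_of_lt_of_le h1 (seq n).2
    rw [EReal.coe_lt_coe_iff] at h3
    linarith
  have hfm : f m = ((coup X m : ℝ) : EReal) :=
    le_antisymm hfm_le (fgec f hne_bot hinf m)
  exact ⟨m, hfm, hbound⟩

end part4

set_option maxHeartbeats 1000000 in
/-- if `f : Z → ℝ ∪ {+∞}` is proper, convex, norm-lsc, and
`inf_w (f_z(w) + h(w)) = 0` for every `z`, then `M_f` is monotone and nonempty,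
and `d(z, M_f) ≤ 2√(f(z) - c(z))` for every `z ∈ Z` (expressed via all real upper
bounds `r` of `f(z) - c(z)`, which also covers the trivial case `f(z) = +∞`). -/
theorem stmt5 {X : Type*} [NormedAddCommGroup X] [NormedSpace ℝ X] [CompleteSpace X]
    (f : X × StrongDual ℝ X → EReal)
    (hne_bot : ∀ z, f z ≠ ⊥) (hproper : ∃ z, f z ≠ ⊤)
    (hconv : Convex ℝ {p : (X × StrongDual ℝ X) × ℝ | f p.1 ≤ (p.2 : EReal)})
    (hlsc : LowerSemicontinuous f)
    (hinf : ∀ z : X × StrongDual ℝ X,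
      (⨅ w : X × StrongDual ℝ X,
        (f (z + w) - ((coup X (z + w) : ℝ) : EReal) + ((coup X w : ℝ) : EReal)
          + ((hfun X w : ℝ) : EReal))) = 0) :
    (∀ z ∈ Mset X f, ∀ w ∈ Mset X f, 0 ≤ (z.2 - w.2) (z.1 - w.1)) ∧
    (Mset X f).Nonempty ∧
    (∀ (z : X × StrongDual ℝ X) (r : ℝ), f z ≤ ((coup X z + r : ℝ) : EReal) →
      sInf ((fun w => nrm2 (z - w)) '' Mset X f) ≤ 2 * Real.sqrt r) := by
  classical
  refine ⟨?_, ?_, ?_⟩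
  · -- monotonicity
    intro z hz w hw
    have hzE : ((z, coup X z) : (X × StrongDual ℝ X) × ℝ) ∈
        {p : (X × StrongDual ℝ X) × ℝ | f p.1 ≤ (p.2 : EReal)} := by
      simp only [Set.mem_setOf_eq]; rw [hz]
    have hwE : ((w, coup X w) : (X × StrongDual ℝ X) × ℝ) ∈
        {p : (X × StrongDual ℝ X) × ℝ | f p.1 ≤ (p.2 : EReal)} := by
      simp only [Set.mem_setOf_eq]; rw [hw]
    have combo := hconv hzE hwE (by norm_num : (0:ℝ) ≤ 1/2) (by norm_num : (0:ℝ) ≤ 1/2)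
      (by norm_num)
    simp only [Set.mem_setOf_eq, Prod.smul_mk, Prod.mk_add_mk, smul_eq_mul] at combo
    have hmid := (fgec f hne_bot hinf ((1/2:ℝ) • z + (1/2:ℝ) • w)).trans combo
    rw [EReal.coe_le_coe_iff] at hmid
    have hcm : coup X ((1/2:ℝ) • z + (1/2:ℝ) • w)
        = (1/2)*(1/2)*(z.2 z.1) + (1/2)*(1/2)*(z.2 w.1) + (1/2)*(1/2)*(w.2 z.1)
          + (1/2)*(1/2)*(w.2 w.1) := by
      simp only [coup, Prod.fst_add, Prod.snd_add, Prod.smul_fst, Prod.smul_snd, map_add,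
        map_smul, ContinuousLinearMap.add_apply, ContinuousLinearMap.smul_apply, smul_eq_mul]
      ring
    rw [hcm] at hmid
    have hexp : (z.2 - w.2) (z.1 - w.1)
        = z.2 z.1 - z.2 w.1 - w.2 z.1 + w.2 w.1 := by
      simp only [ContinuousLinearMap.sub_apply, map_sub]
      ring
    rw [hexp]
    simp only [coup] at hmid
    linarith
  · -- nonempty
    obtain ⟨z₀, hz₀⟩ := hproper
    have heq : f z₀ ≤ ((coup X z₀ + ((f z₀).toReal - coup X z₀) : ℝ) : EReal) := by
      rw [show coup X z₀ + ((f z₀).toReal - coup X z₀) = (f z₀).toReal by ring]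
      rw [EReal.coe_toReal hz₀ (hne_bot z₀)]
    obtain ⟨m, hm, _⟩ := mainLemma f hne_bot ⟨z₀, hz₀⟩ hconv hinf hlsc z₀
      ((f z₀).toReal - coup X z₀) 1 one_pos heq
    exact ⟨m, hm⟩
  · -- distance estimate
    intro z r hzr
    have hr0 : 0 ≤ r := by
      have h1 := (fgec f hne_bot hinf z).trans hzr
      rw [EReal.coe_le_coe_iff] at h1; linarith
    have hbdd : BddBelow ((fun w => nrm2 (z - w)) '' Mset X f) := by
      refine ⟨0, ?_⟩
      rintro x ⟨w, hw, rfl⟩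
      exact nrm2_nonneg _
    have key : ∀ ε : ℝ, 0 < ε →
        sInf ((fun w => nrm2 (z - w)) '' Mset X f) ≤ Real.sqrt (2*r) + ε := by
      intro ε hε
      obtain ⟨m, hm, hb⟩ := mainLemma f hne_bot hproper hconv hinf hlsc z r ((ε/12)^2)
        (by positivity) hzr
      have hmem : nrm2 (z - m) ∈ (fun w => nrm2 (z - w)) '' Mset X f := ⟨m, hm, rfl⟩
      have h1 : sInf ((fun w => nrm2 (z - w)) '' Mset X f) ≤ nrm2 (z - m) := csInf_le hbdd hmem
      have h2 : Real.sqrt ((ε/12)^2) = ε/12 := Real.sqrt_sq (by positivity)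
      rw [h2] at hb
      linarith
    have h1 : sInf ((fun w => nrm2 (z - w)) '' Mset X f) ≤ Real.sqrt (2*r) :=
      le_of_forall_pos_le_add key
    refine h1.trans ?_
    rw [Real.sqrt_mul (by norm_num : (0:ℝ) ≤ 2) r]
    have h2 : Real.sqrt 2 ≤ 2 := by
      nlinarith [Real.sq_sqrt (by norm_num : (0:ℝ) ≤ 2), Real.sqrt_nonneg 2]
    exact mul_le_mul_of_nonneg_right h2 (Real.sqrt_nonneg r)
end
end
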